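/- arXiv:1008.3034 — 7 statements merged into one kernel-verified Lean document; each statement's English description precedes it below -/
import Mathlib

section
/- Let (E_k, 𝓔_k), k = 0,…,n, be measurable spaces, let M_{k+1} and M̂_{k+1} be bounded positive integral kernels from E_k to E_{k+1} (with M̂_{k+1} acting on subsets Ê_k ⊂ E_k), and let f_k, f̂_k be bounded nonnegative measurable functions on E_k. Define u_k by the backward recursion u_n = f_n and u_k = f_k ∨ M_{k+1}(u_{k+1}), and û_k by û_n = f̂_n and û_k = f̂_k ∨ M̂_{k+1}(û_{k+1}). Then for any 0 ≤ k < n, at every point of Ê_k, |u_k − û_k| ≤ Σ_{l=k}^{n} M̂_{k,l}|f_l − f̂_l| + Σ_{l=k}^{n−1} M̂_{k,l}|(M_{l+1} − M̂_{l+1})u_{l+1}|, where M̂_{k,l} := M̂_{k+1}M̂_{k+2}⋯M̂_l denotes the composition of kernels, with M̂_{k,k} = Id. -/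
open MeasureTheory ProbabilityTheory

/-- The action of the composition of kernels `K_{k+1} K_{k+2} ⋯ K_{k+j}` (where `K m` is a
kernel from `E m` to `E (m+1)`) on a bounded measurable function on `E (k+j)`, producing a
function on `E k`.  For `j = 0` this is the identity. -/
noncomputable def kernelComp {E : ℕ → Type*} [∀ k, MeasurableSpace (E k)]
    (K : ∀ k, Kernel (E k) (E (k + 1))) (k : ℕ) :
    ∀ j : ℕ, (E (k + j) → ℝ) → E k → ℝ
  | 0, φ => φ
  | j + 1, φ => kernelComp K k j (fun x => ∫ y, φ y ∂(K (k + j) x))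

/-- A bounded measurable real function. -/
def IsGood {α : Type*} [MeasurableSpace α] (φ : α → ℝ) : Prop :=
  Measurable φ ∧ ∃ C, 0 ≤ C ∧ ∀ x, |φ x| ≤ C

theorem IsGood.integrable {α : Type*} [MeasurableSpace α] {φ : α → ℝ} (h : IsGood φ)
    (μ : Measure α) [IsFiniteMeasure μ] : Integrable φ μ := by
  obtain ⟨hm, C, _, hC⟩ := h
  exact ⟨hm.aestronglyMeasurable,
    HasFiniteIntegral.of_bounded (C := C) (Filter.Eventually.of_forall (fun x => by
      simpa [Real.norm_eq_abs] using hC x))⟩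

theorem IsGood.max {α : Type*} [MeasurableSpace α] {φ ψ : α → ℝ} (h : IsGood φ)
    (h' : IsGood ψ) : IsGood (fun x => max (φ x) (ψ x)) := by
  obtain ⟨hm, C, hC0, hC⟩ := h
  obtain ⟨hm', C', hC0', hC'⟩ := h'
  refine ⟨hm.max hm', Max.max C C', le_max_of_le_left hC0, fun x => ?_⟩
  have h1 := abs_le.1 (hC x)
  have h2 := abs_le.1 (hC' x)
  rw [abs_le]
  refine ⟨le_trans (neg_le_neg (le_max_left C C')) (le_trans h1.1 (le_max_left _ _)), ?_⟩
  exact max_le (h1.2.trans (le_max_left _ _)) (h2.2.trans (le_max_right _ _))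

theorem IsGood.abs_sub {α : Type*} [MeasurableSpace α] {φ ψ : α → ℝ} (h : IsGood φ)
    (h' : IsGood ψ) : IsGood (fun x => |φ x - ψ x|) := by
  obtain ⟨hm, C, hC0, hC⟩ := h
  obtain ⟨hm', C', hC0', hC'⟩ := h'
  refine ⟨(hm.sub hm').abs, C + C', by linarith, fun x => ?_⟩
  rw [abs_abs]
  exact le_trans (_root_.abs_sub _ _) (add_le_add (hC x) (hC' x))

theorem IsGood.kernel_integral {α β : Type*} [MeasurableSpace α] [MeasurableSpace β]
    (K : Kernel α β) [IsFiniteKernel K] {φ : β → ℝ} (h : IsGood φ) :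
    IsGood (fun x => ∫ y, φ y ∂(K x)) := by
  obtain ⟨hm, C, hC0, hC⟩ := h
  constructor
  · have : StronglyMeasurable fun p : α × β => φ p.2 :=
      (hm.comp measurable_snd).stronglyMeasurable
    exact (this.integral_kernel_prod_right' (κ := K)).measurable
  · refine ⟨C * (Kernel.bound K).toReal, by positivity, fun x => ?_⟩
    calc |∫ y, φ y ∂(K x)| ≤ C * ((K x) Set.univ).toReal := by
          simpa [Real.norm_eq_abs, measureReal_def] using
            norm_integral_le_of_norm_le_const (μ := K x) (f := φ) (C := C)
              (Filter.Eventually.of_forall (fun y => by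
                simpa [Real.norm_eq_abs] using hC y))
      _ ≤ C * (Kernel.bound K).toReal := by
          have h := ENNReal.toReal_le_toReal (measure_ne_top (K x) Set.univ)
              (Kernel.bound_ne_top K) |>.mpr (Kernel.measure_le_bound K x Set.univ)
          nlinarith [h]

theorem kernelComp_left {E : ℕ → Type*} [∀ k, MeasurableSpace (E k)]
    (K : ∀ k, Kernel (E k) (E (k + 1))) :
    ∀ (j : ℕ) (g : ∀ m, E m → ℝ) (k : ℕ),
      kernelComp K k (j + 1) (g (k + (j + 1))) =
        fun x => ∫ y, kernelComp K (k + 1) j (g (k + 1 + j)) y ∂(K k x) := by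
  intro j
  induction j with
  | zero => intro g k; rfl
  | succ j ih =>
    intro g k
    show kernelComp K k (j + 1) ((fun m => fun x => ∫ y, g (m + 1) y ∂(K m x)) (k + (j + 1))) = _
    rw [ih (fun m x => ∫ y, g (m + 1) y ∂(K m x)) k]
    rfl

theorem isGood_kernelComp {E : ℕ → Type*} [∀ k, MeasurableSpace (E k)]
    (K : ∀ k, Kernel (E k) (E (k + 1))) [∀ k, IsFiniteKernel (K k)] :
    ∀ (j : ℕ) (g : ∀ m, E m → ℝ), (∀ m, IsGood (g m)) → ∀ k,
      IsGood (kernelComp K k j (g (k + j))) := by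
  intro j
  induction j with
  | zero => intro g hg k; exact hg k
  | succ j ih =>
    intro g hg k
    show IsGood (kernelComp K k j ((fun m => fun x => ∫ y, g (m + 1) y ∂(K m x)) (k + j)))
    exact ih _ (fun m => (hg (m + 1)).kernel_integral (K m)) k

/-- Truncated version of the family `m ↦ |(M u)(m) - (M̂ u)(m)|`, set to `0` beyond `n`. -/
noncomputable def hhAux {E : ℕ → Type*} [∀ k, MeasurableSpace (E k)] (n : ℕ)
    (M Mhat : ∀ k, Kernel (E k) (E (k + 1))) (u : ∀ k, E k → ℝ) (m : ℕ) : E m → ℝ :=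
  if m < n then
    fun y => |(∫ z, u (m + 1) z ∂(M m y)) - ∫ z, u (m + 1) z ∂(Mhat m y)|
  else fun _ => 0

/-- Robustness lemma for Snell envelopes: if `u` and `û` are the Snell envelopes built
from the data `(f, M)` and `(f̂, M̂)` respectively, then on `Ê_k`, the difference `|u_k - û_k|`
is controlled by the sums `Σ_{l=k}^{n} M̂_{k,l}|f_l - f̂_l| + Σ_{l=k}^{n-1} M̂_{k,l}|(M_{l+1} - M̂_{l+1}) u_{l+1}|`. -/
theorem snell_robustness
    (E : ℕ → Type*) [∀ k, MeasurableSpace (E k)] (n : ℕ)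
    (Ehat : ∀ k, Set (E k))
    (M Mhat : ∀ k, Kernel (E k) (E (k + 1)))
    [∀ k, IsFiniteKernel (M k)] [∀ k, IsFiniteKernel (Mhat k)]
    (f fhat : ∀ k, E k → ℝ)
    (hf_meas : ∀ k, Measurable (f k)) (hfhat_meas : ∀ k, Measurable (fhat k))
    (hf_nonneg : ∀ k x, 0 ≤ f k x) (hfhat_nonneg : ∀ k x, 0 ≤ fhat k x)
    (hf_bdd : ∀ k, ∃ C, ∀ x, f k x ≤ C) (hfhat_bdd : ∀ k, ∃ C, ∀ x, fhat k x ≤ C)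
    (u uhat : ∀ k, E k → ℝ)
    (hu_term : u n = f n)
    (hu_rec : ∀ k, k < n → ∀ x, u k x = max (f k x) (∫ y, u (k + 1) y ∂(M k x)))
    (huhat_term : uhat n = fhat n)
    (huhat_rec : ∀ k, k < n →
      ∀ x, uhat k x = max (fhat k x) (∫ y, uhat (k + 1) y ∂(Mhat k x))) :
    ∀ k, k < n → ∀ x ∈ Ehat k,
      |u k x - uhat k x| ≤
        (∑ j ∈ Finset.range (n - k + 1),
          kernelComp Mhat k j (fun y => |f (k + j) y - fhat (k + j) y|) x)
        + ∑ j ∈ Finset.range (n - k),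
          kernelComp Mhat k j
            (fun y => |(∫ z, u (k + j + 1) z ∂(M (k + j) y))
              - ∫ z, u (k + j + 1) z ∂(Mhat (k + j) y)|) x := by
  -- goodness of the data
  have good_f : ∀ m, IsGood (f m) := by
    intro m
    obtain ⟨C, hC⟩ := hf_bdd m
    exact ⟨hf_meas m, max C 0, le_max_right _ _, fun x => by
      rw [abs_of_nonneg (hf_nonneg m x)]; exact le_max_of_le_left (hC x)⟩
  have good_fhat : ∀ m, IsGood (fhat m) := by
    intro m
    obtain ⟨C, hC⟩ := hfhat_bdd m
    exact ⟨hfhat_meas m, max C 0, le_max_right _ _, fun x => by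
      rw [abs_of_nonneg (hfhat_nonneg m x)]; exact le_max_of_le_left (hC x)⟩
  -- goodness of the Snell envelopes
  have good_u : ∀ j k, k + j = n → IsGood (u k) := by
    intro j
    induction j with
    | zero =>
      intro k hk
      have : k = n := by omega
      subst this
      rw [hu_term]; exact good_f _
    | succ j ih =>
      intro k hk
      have hkn : k < n := by omega
      have h1 : IsGood (u (k + 1)) := ih (k + 1) (by omega)
      have : u k = fun x => max (f k x) (∫ y, u (k + 1) y ∂(M k x)) :=
        funext (hu_rec k hkn)
      rw [this]
      exact (good_f k).max (h1.kernel_integral (M k))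
  have good_uhat : ∀ j k, k + j = n → IsGood (uhat k) := by
    intro j
    induction j with
    | zero =>
      intro k hk
      have : k = n := by omega
      subst this
      rw [huhat_term]; exact good_fhat _
    | succ j ih =>
      intro k hk
      have hkn : k < n := by omega
      have h1 : IsGood (uhat (k + 1)) := ih (k + 1) (by omega)
      have : uhat k = fun x => max (fhat k x) (∫ y, uhat (k + 1) y ∂(Mhat k x)) :=
        funext (huhat_rec k hkn)
      rw [this]
      exact (good_fhat k).max (h1.kernel_integral (Mhat k))
  have good_u' : ∀ m, m ≤ n → IsGood (u m) := fun m hm => good_u (n - m) m (by omega)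
  have good_uhat' : ∀ m, m ≤ n → IsGood (uhat m) := fun m hm => good_uhat (n - m) m (by omega)
  -- families
  set g : ∀ m, E m → ℝ := fun m y => |f m y - fhat m y| with hg_def
  set hh : ∀ m, E m → ℝ := hhAux n M Mhat u with hh_def
  have good_g : ∀ m, IsGood (g m) := fun m => (good_f m).abs_sub (good_fhat m)
  have good_hh : ∀ m, IsGood (hh m) := by
    intro m
    rw [hh_def, hhAux]
    split_ifs with hmn
    · exact ((good_u' (m + 1) (by omega)).kernel_integral (M m)).abs_sub
        ((good_u' (m + 1) (by omega)).kernel_integral (Mhat m))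
    · exact ⟨measurable_const, 0, le_refl _, fun x => by simp⟩
  -- main induction
  have key : ∀ j k, k + j = n → ∀ x,
      |u k x - uhat k x| ≤
        (∑ j' ∈ Finset.range (j + 1), kernelComp Mhat k j' (g (k + j')) x)
        + ∑ j' ∈ Finset.range j, kernelComp Mhat k j' (hh (k + j')) x := by
    intro j
    induction j with
    | zero =>
      intro k hk x
      have : k = n := by omega
      subst this
      simp only [zero_add, Finset.sum_range_one, Finset.sum_range_zero, add_zero]
      rw [hu_term, huhat_term]
      exact le_of_eq rfl
    | succ j ih =>
      intro k hk x
      have hkn : k < n := by omega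
      have hk1 : (k + 1) + j = n := by omega
      have gu1 : IsGood (u (k + 1)) := good_u' (k + 1) (by omega)
      have guh1 : IsGood (uhat (k + 1)) := good_uhat' (k + 1) (by omega)
      -- pointwise estimate
      have hA : ∀ j', IsGood (kernelComp Mhat (k + 1) j' (g (k + 1 + j'))) :=
        fun j' => isGood_kernelComp Mhat j' g good_g (k + 1)
      have hB : ∀ j', IsGood (kernelComp Mhat (k + 1) j' (hh (k + 1 + j'))) :=
        fun j' => isGood_kernelComp Mhat j' hh good_hh (k + 1)
      have intA : Integrable (fun y => ∑ j' ∈ Finset.range (j + 1),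
          kernelComp Mhat (k + 1) j' (g (k + 1 + j')) y) (Mhat k x) :=
        integrable_finset_sum _ (fun j' _ => (hA j').integrable _)
      have intB : Integrable (fun y => ∑ j' ∈ Finset.range j,
          kernelComp Mhat (k + 1) j' (hh (k + 1 + j')) y) (Mhat k x) :=
        integrable_finset_sum _ (fun j' _ => (hB j').integrable _)
      have step1 : |u k x - uhat k x| ≤ g k x
          + |(∫ y, u (k + 1) y ∂(M k x)) - ∫ y, uhat (k + 1) y ∂(Mhat k x)| := by
        rw [hu_rec k hkn x, huhat_rec k hkn x]
        refine le_trans (abs_max_sub_max_le_max _ _ _ _) (max_le ?_ ?_)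
        · exact le_add_of_nonneg_right (abs_nonneg _)
        · exact le_add_of_nonneg_left (abs_nonneg _)
      have step2 : |(∫ y, u (k + 1) y ∂(M k x)) - ∫ y, uhat (k + 1) y ∂(Mhat k x)| ≤
          hh k x + ∫ y, |u (k + 1) y - uhat (k + 1) y| ∂(Mhat k x) := by
        have h2a : hh k x = |(∫ y, u (k + 1) y ∂(M k x)) - ∫ y, u (k + 1) y ∂(Mhat k x)| := by
          rw [hh_def, hhAux, if_pos hkn]
        rw [h2a]
        refine le_trans (abs_sub_le _ (∫ y, u (k + 1) y ∂(Mhat k x)) _) ?_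
        gcongr
        rw [← integral_sub (gu1.integrable _) (guh1.integrable _)]
        simpa [Real.norm_eq_abs] using
          norm_integral_le_integral_norm (μ := Mhat k x)
            (f := fun y => u (k + 1) y - uhat (k + 1) y)
      have step3 : ∫ y, |u (k + 1) y - uhat (k + 1) y| ∂(Mhat k x) ≤
          ∫ y, ((∑ j' ∈ Finset.range (j + 1), kernelComp Mhat (k + 1) j' (g (k + 1 + j')) y)
            + ∑ j' ∈ Finset.range j, kernelComp Mhat (k + 1) j' (hh (k + 1 + j')) y)
            ∂(Mhat k x) := by
        refine integral_mono ((gu1.abs_sub guh1).integrable _) (intA.add intB) ?_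
        intro y
        exact ih (k + 1) hk1 y
      -- rearranging the RHS
      have eA : ∑ j' ∈ Finset.range (j + 1 + 1), kernelComp Mhat k j' (g (k + j')) x
          = g k x + ∫ y, (∑ j' ∈ Finset.range (j + 1),
              kernelComp Mhat (k + 1) j' (g (k + 1 + j')) y) ∂(Mhat k x) := by
        rw [Finset.sum_range_succ']
        rw [integral_finset_sum _ (fun j' _ => (hA j').integrable _)]
        rw [add_comm]
        congr 1
        refine Finset.sum_congr rfl (fun j' _ => ?_)
        exact congrFun (kernelComp_left Mhat j' g k) x
      have eB : ∑ j' ∈ Finset.range (j + 1), kernelComp Mhat k j' (hh (k + j')) x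
          = hh k x + ∫ y, (∑ j' ∈ Finset.range j,
              kernelComp Mhat (k + 1) j' (hh (k + 1 + j')) y) ∂(Mhat k x) := by
        rw [Finset.sum_range_succ']
        rw [integral_finset_sum _ (fun j' _ => (hB j').integrable _)]
        rw [add_comm]
        congr 1
        refine Finset.sum_congr rfl (fun j' _ => ?_)
        exact congrFun (kernelComp_left Mhat j' hh k) x
      rw [eA, eB, integral_add intA intB] at *
      calc |u k x - uhat k x| ≤ g k x
            + |(∫ y, u (k + 1) y ∂(M k x)) - ∫ y, uhat (k + 1) y ∂(Mhat k x)| := step1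
        _ ≤ g k x + (hh k x + ∫ y, |u (k + 1) y - uhat (k + 1) y| ∂(Mhat k x)) := by linarith
        _ ≤ g k x + (hh k x + ((∫ y, (∑ j' ∈ Finset.range (j + 1),
              kernelComp Mhat (k + 1) j' (g (k + 1 + j')) y) ∂(Mhat k x))
            + ∫ y, (∑ j' ∈ Finset.range j,
              kernelComp Mhat (k + 1) j' (hh (k + 1 + j')) y) ∂(Mhat k x))) := by linarith
        _ = _ := by ring
  -- conclusion
  intro k hkn x _
  have hsum : (∑ j ∈ Finset.range (n - k), kernelComp Mhat k j
      (fun y => |(∫ z, u (k + j + 1) z ∂(M (k + j) y))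
        - ∫ z, u (k + j + 1) z ∂(Mhat (k + j) y)|) x)
      = ∑ j ∈ Finset.range (n - k), kernelComp Mhat k j (hh (k + j)) x := by
    refine Finset.sum_congr rfl (fun j hj => ?_)
    have hjn : k + j < n := by
      have := Finset.mem_range.1 hj; omega
    have : hh (k + j) = fun y => |(∫ z, u (k + j + 1) z ∂(M (k + j) y))
        - ∫ z, u (k + j + 1) z ∂(Mhat (k + j) y)| := by
      rw [hh_def, hhAux, if_pos hjn]
    rw [this]
  rw [hsum]
  exact key (n - k) k (by omega) x
end

section
/- Let (X_k)_{0≤k≤n} be a Markov chain with state spaces (E_k,𝓔_k) and Markov transition kernels M_k from E_{k−1} to E_k, let f_k and G_k be bounded nonnegative measurable functions on E_k, and set F_k(x_0,…,x_k) := f_k(x_k) ∏_{p=0}^{k−1} G_p(x_p). Let 𝓜_{k+1} be the historical-process transition 𝓜_{k+1}(χ_k, dχ'_{k+1}) = δ_{χ_k}(dχ'_k) M_{k+1}(x'_k, dx'_{k+1}) on path spaces. Define the path-dependent Snell envelope u_k by the backward recursion u_n = F_n and u_k(x_0,…,x_k) = F_k(x_0,…,x_k) ∨ 𝓜_{k+1}(u_{k+1})(x_0,…,x_k),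 and define v_k on E_k by v_n = f_n and v_k(x_k) = f_k(x_k) ∨ [G_k(x_k) · M_{k+1}(v_{k+1})(x_k)]. Then for all 0 ≤ k ≤ n and all (x_0,…,x_k), u_k(x_0,…,x_k) = v_k(x_k) ∏_{p=0}^{k−1} G_p(x_p); in particular u_0(x_0) = v_0(x_0). -/
open MeasureTheory ProbabilityTheory

/-- The multiplicatively path-dependent Snell envelope `u_k` on path space, associated to the
gain functions `F_k(x_0,…,x_k) = f_k(x_k) ∏_{p<k} G_p(x_p)` and the historical-process
transitions `𝓜_{k+1}(χ_k, dχ'_{k+1}) = δ_{χ_k}(dχ'_k) M_{k+1}(x'_k, dx'_{k+1})`, factorizes as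
`u_k(x_0,…,x_k) = v_k(x_k) ∏_{p<k} G_p(x_p)` where `v` is the standard Snell envelope of the
recursion `v_k = f_k ∨ (G_k · M_{k+1}(v_{k+1}))`; in particular `u_0 = v_0`. -/
theorem path_dependent_snell_factorization
    (E : ℕ → Type*) [∀ k, MeasurableSpace (E k)] (n : ℕ)
    (M : ∀ k, Kernel (E k) (E (k + 1))) [∀ k, IsMarkovKernel (M k)]
    (f G : ∀ k, E k → ℝ)
    (hf_meas : ∀ k, Measurable (f k)) (hG_meas : ∀ k, Measurable (G k))
    (hf_nonneg : ∀ k x, 0 ≤ f k x) (hG_nonneg : ∀ k x, 0 ≤ G k x)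
    (hf_bdd : ∀ k, ∃ C, ∀ x, f k x ≤ C) (hG_bdd : ∀ k, ∃ C, ∀ x, G k x ≤ C)
    -- the path-dependent gain functions `F_k`
    (F : ∀ k, (∀ i : Fin (k + 1), E i) → ℝ)
    (hF : ∀ k, ∀ χ : ∀ i : Fin (k + 1), E i,
      F k χ = f k (χ (Fin.last k)) * ∏ p : Fin k, G p (χ p.castSucc))
    -- the path-dependent Snell envelope `u`
    (u : ∀ k, (∀ i : Fin (k + 1), E i) → ℝ)
    (hu_term : ∀ χ : ∀ i : Fin (n + 1), E i, u n χ = F n χ)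
    (hu_rec : ∀ k, k < n → ∀ χ : ∀ i : Fin (k + 1), E i,
      u k χ = max (F k χ)
        (∫ y, u (k + 1) (Fin.snoc χ y) ∂(M k (χ (Fin.last k)))))
    -- the standard Snell envelope `v`
    (v : ∀ k, E k → ℝ)
    (hv_term : v n = f n)
    (hv_rec : ∀ k, k < n → ∀ x,
      v k x = max (f k x) (G k x * ∫ y, v (k + 1) y ∂(M k x))) :
    (∀ k, k ≤ n → ∀ χ : ∀ i : Fin (k + 1), E i,
      u k χ = v k (χ (Fin.last k)) * ∏ p : Fin k, G p (χ p.castSucc)) ∧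
    (∀ χ : ∀ i : Fin 1, E i, u 0 χ = v 0 (χ (Fin.last 0))) := by
  have main : ∀ d k, k + d = n → ∀ χ : ∀ i : Fin (k + 1), E i,
      u k χ = v k (χ (Fin.last k)) * ∏ p : Fin k, G p (χ p.castSucc) := by
    intro d
    induction d with
    | zero =>
      intro k hk χ
      subst hk
      simp only [Nat.add_zero] at *
      rw [hu_term, hF, hv_term]
    | succ d ih =>
      intro k hk χ
      have hkn : k < n := by omega
      have hP : (0 : ℝ) ≤ ∏ p : Fin k, G p (χ p.castSucc) :=
        Finset.prod_nonneg fun p _ => hG_nonneg _ _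
      rw [hu_rec k hkn χ, hF, hv_rec k hkn]
      have hint : (∫ y, u (k + 1) (Fin.snoc χ y) ∂(M k (χ (Fin.last k))))
          = (G k (χ (Fin.last k)) * ∫ y, v (k + 1) y ∂(M k (χ (Fin.last k))))
            * ∏ p : Fin k, G p (χ p.castSucc) := by
        have heq : ∀ y : E (k + 1),
            u (k + 1) (Fin.snoc χ y)
              = v (k + 1) y * (G k (χ (Fin.last k)) * ∏ p : Fin k, G p (χ p.castSucc)) := by
          intro y
          have := ih (k + 1) (by omega) (Fin.snoc χ y)
          rw [this]
          congr 1
          · exact congrArg _ (Fin.snoc_last _ _)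
          · rw [Fin.prod_univ_castSucc]
            simp [Fin.snoc_castSucc, Fin.snoc_last, mul_comm]
        simp only [heq]
        rw [integral_mul_const]
        ring
      rw [hint, max_mul_of_nonneg _ _ hP]
  exact ⟨fun k hk χ => main (n - k) k (by omega) χ,
    fun χ => by simpa using main n 0 (by omega) χ⟩
end

section
/- Let M_{k+1} be a Markov kernel from E_k to E_{k+1} of the form M_{k+1}(x_k, dx_{k+1}) = H_{k+1}(x_k, x_{k+1}) λ_{k+1}(dx_{k+1}) for a strictly positive measurable function H_{k+1} and a measure λ_{k+1} on E_{k+1}, and let G_k be a bounded nonnegative measurable function on E_k. For a probability measure η on E_k with η(G_k) > 0, define Φ_{k+1}(η)(f) := η(G_k · M_{k+1}(f)) / η(G_k). Then for every x_k ∈ E_k, the measure M_{k+1}(x_k, ·) is absolutely continuous with respect to Φ_{k+1}(η), with density (dM_{k+1}(x_k,·)/dΦ_{k+1}(η))(x_{k+1}) = H_{k+1}(x_k, x_{k+1}) · η(G_k) / η(G_k H_{k+1}(·, x_{k+1})); equivalently, for every bounded measurable f on E_{k+1}, ∫ M_{k+1}(x_k, dx_{k+1}) f(x_{k+1}) = ∫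 Φ_{k+1}(η)(dx_{k+1}) H_{k+1}(x_k, x_{k+1}) (η(G_k)/η(G_k H_{k+1}(·, x_{k+1}))) f(x_{k+1}). -/
open MeasureTheory ProbabilityTheory
open scoped ENNReal NNReal

/-- For a Markov kernel `M(x,dy) = H(x,y) λ(dy)` with strictly positive density `H`, a bounded
nonnegative potential `G` and a probability measure `η` with `η(G) > 0`, the kernel
`M(x,·)` is absolutely continuous w.r.t. the updated measure `Φ(η)` defined by
`Φ(η)(f) = η(G · M(f)) / η(G)`, with density
`(dM(x,·)/dΦ(η))(y) = H(x,y) η(G) / η(G H(·,y))`: for every bounded measurable `f`,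
`∫ M(x,dy) f(y) = ∫ Φ(η)(dy) H(x,y) (η(G)/η(G H(·,y))) f(y)`. -/
theorem kernel_radon_nikodym_wrt_updated_measure
    (E E' : Type*) [MeasurableSpace E] [MeasurableSpace E']
    (lam : Measure E') [SigmaFinite lam]
    (H : E → E' → ℝ) (hH_meas : Measurable (Function.uncurry H))
    (hH_pos : ∀ x y, 0 < H x y)
    -- `M(x,dy) = H(x,y) λ(dy)` is a Markov kernel
    (hMarkov : ∀ x, ∫ y, H x y ∂lam = 1)
    (G : E → ℝ) (hG_meas : Measurable G) (hG_nonneg : ∀ x, 0 ≤ G x)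
    (hG_bdd : ∃ C, ∀ x, G x ≤ C)
    (η : Measure E) [IsProbabilityMeasure η]
    (hηG_pos : 0 < ∫ x, G x ∂η)
    -- `η(G H(·,y))` is finite and positive for every `y`
    (hGH_int : ∀ y, Integrable (fun x => G x * H x y) η)
    (hGH_pos : ∀ y, 0 < ∫ x, G x * H x y ∂η)
    -- `ν` is the updated measure `Φ(η)`: `ν(f) = η(G·M(f))/η(G)` for bounded measurable `f`
    (ν : Measure E') [IsProbabilityMeasure ν]
    (hν : ∀ f : E' → ℝ, Measurable f → (∃ C, ∀ y, |f y| ≤ C) →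
      ∫ y, f y ∂ν = (∫ x, G x * ∫ y, H x y * f y ∂lam ∂η) / ∫ x, G x ∂η) :
    ∀ x : E, ∀ f : E' → ℝ, Measurable f → (∃ C, ∀ y, |f y| ≤ C) →
      ∫ y, H x y * f y ∂lam
        = ∫ y, H x y * ((∫ z, G z ∂η) / (∫ z, G z * H z y ∂η)) * f y ∂ν := by
  set cG : ℝ := ∫ z, G z ∂η with hcG
  set d : E' → ℝ := fun y => ∫ z, G z * H z y ∂η with hd
  have hd_pos : ∀ y, 0 < d y := hGH_pos
  -- measurability of d
  have hd_meas : Measurable d := by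
    have : StronglyMeasurable (Function.uncurry fun z y => G z * H z y) := by
      apply Measurable.stronglyMeasurable
      exact (hG_meas.comp measurable_fst).mul hH_meas
    exact this.integral_prod_left.measurable
  -- H x · is integrable for each x
  have hHx_int : ∀ x, Integrable (fun y => H x y) lam := by
    intro x
    by_contra h
    have h2 := hMarkov x
    rw [integral_undef h] at h2
    exact one_ne_zero h2.symm
  have hHx_meas : ∀ x, Measurable fun y => H x y := fun x =>
    hH_meas.comp (measurable_prodMk_left)
  have hHy_meas : ∀ y, Measurable fun x => H x y := fun y =>
    hH_meas.comp (measurable_prodMk_right)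
  have hH_lint : ∀ x, ∫⁻ y, ENNReal.ofReal (H x y) ∂lam = 1 := by
    intro x
    rw [← ofReal_integral_eq_lintegral_ofReal (hHx_int x)
      (Filter.Eventually.of_forall fun y => (hH_pos x y).le), hMarkov x, ENNReal.ofReal_one]
  obtain ⟨C, hC⟩ := hG_bdd
  -- key Tonelli identity
  have key : ∀ s : Set E', MeasurableSet s →
      ∫⁻ x, ENNReal.ofReal (G x) * ∫⁻ y in s, ENNReal.ofReal (H x y) ∂lam ∂η
        = ∫⁻ y in s, ENNReal.ofReal (d y) ∂lam := by
    intro s hs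
    have h1 : ∀ x, ENNReal.ofReal (G x) * ∫⁻ y in s, ENNReal.ofReal (H x y) ∂lam
        = ∫⁻ y in s, ENNReal.ofReal (G x) * ENNReal.ofReal (H x y) ∂lam := by
      intro x
      rw [lintegral_const_mul _ (hHx_meas x).ennreal_ofReal]
    simp_rw [h1]
    rw [lintegral_lintegral_swap]
    · refine lintegral_congr fun y => ?_
      have h2 : ENNReal.ofReal (d y) = ∫⁻ z, ENNReal.ofReal (G z * H z y) ∂η :=
        ofReal_integral_eq_lintegral_ofReal (hGH_int y)
          (Filter.Eventually.of_forall fun z => mul_nonneg (hG_nonneg z) (hH_pos z y).le)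
      rw [h2]
      exact lintegral_congr fun z => (ENNReal.ofReal_mul (hG_nonneg z)).symm
    · apply Measurable.aemeasurable
      exact ((hG_meas.comp measurable_fst).ennreal_ofReal.mul hH_meas.ennreal_ofReal)
  -- finiteness
  have hL_fin : ∀ s : Set E', MeasurableSet s →
      ∫⁻ y in s, ENNReal.ofReal (d y) ∂lam < ⊤ := by
    intro s hs
    rw [← key s hs]
    calc ∫⁻ x, ENNReal.ofReal (G x) * ∫⁻ y in s, ENNReal.ofReal (H x y) ∂lam ∂η
        ≤ ∫⁻ _z, ENNReal.ofReal C * 1 ∂η := by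
          refine lintegral_mono fun x => ?_
          exact mul_le_mul' (ENNReal.ofReal_le_ofReal (hC x))
            ((lintegral_mono' Measure.restrict_le_self le_rfl).trans (hH_lint x).le)
      _ < ⊤ := by simp [lintegral_const]
  -- ν is the withDensity measure
  have hν_eq : ν = lam.withDensity fun y => ((d y / cG).toNNReal : ℝ≥0∞) := by
    ext s hs
    have hb : ∃ B, ∀ y, |Set.indicator s (1 : E' → ℝ) y| ≤ B := by
      refine ⟨1, fun y => ?_⟩
      by_cases hy : y ∈ s <;> simp [Set.indicator, hy]
    have hm : Measurable (Set.indicator s (1 : E' → ℝ)) :=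
      measurable_const.indicator hs
    have h0 := hν _ hm hb
    rw [integral_indicator_one hs] at h0
    have hin : ∀ x, (∫ y, H x y * Set.indicator s (1 : E' → ℝ) y ∂lam)
        = ∫ y in s, H x y ∂lam := by
      intro x
      rw [← integral_indicator hs]
      congr 1
      ext y
      by_cases hy : y ∈ s <;> simp [Set.indicator, hy]
    simp_rw [hin] at h0
    -- convert the η-integral to lintegrals
    have h2 : (∫ x, G x * ∫ y in s, H x y ∂lam ∂η)
        = (∫⁻ y in s, ENNReal.ofReal (d y) ∂lam).toReal := by
      rw [integral_eq_lintegral_of_nonneg_ae]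
      · congr 1
        rw [← key s hs]
        refine lintegral_congr fun x => ?_
        rw [ENNReal.ofReal_mul (hG_nonneg x)]
        congr 1
        rw [← ofReal_integral_eq_lintegral_ofReal ((hHx_int x).restrict)
          (Filter.Eventually.of_forall fun y => (hH_pos x y).le)]
      · exact Filter.Eventually.of_forall fun x =>
          mul_nonneg (hG_nonneg x) (integral_nonneg fun y => (hH_pos x y).le)
      · apply Measurable.aestronglyMeasurable
        refine hG_meas.mul ?_
        exact (hH_meas.stronglyMeasurable.integral_prod_right' (ν := lam.restrict s)).measurable
    rw [h2] at h0
    rw [withDensity_apply _ hs]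
    have hwd : ∫⁻ y in s, ((d y / cG).toNNReal : ℝ≥0∞) ∂lam
        = (∫⁻ y in s, ENNReal.ofReal (d y) ∂lam) * ENNReal.ofReal cG⁻¹ := by
      rw [← lintegral_mul_const _ hd_meas.ennreal_ofReal]
      refine lintegral_congr fun y => ?_
      show ENNReal.ofReal (d y / cG) = ENNReal.ofReal (d y) * ENNReal.ofReal cG⁻¹
      rw [div_eq_mul_inv, ENNReal.ofReal_mul (hd_pos y).le]
    rw [hwd]
    have hfin1 : ν s ≠ ⊤ := measure_ne_top ν s
    have hfin2 : (∫⁻ y in s, ENNReal.ofReal (d y) ∂lam) * ENNReal.ofReal cG⁻¹ ≠ ⊤ :=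
      ENNReal.mul_ne_top (hL_fin s hs).ne ENNReal.ofReal_ne_top
    rw [← ENNReal.toReal_eq_toReal_iff' hfin1 hfin2]
    rw [← Measure.real_def, h0, ENNReal.toReal_mul, ENNReal.toReal_ofReal (inv_nonneg.mpr hηG_pos.le)]
    rw [div_eq_mul_inv]
  -- now prove the main statement
  intro x f hf_meas hf_bdd
  rw [hν_eq]
  rw [integral_withDensity_eq_integral_smul (hd_meas.div_const cG).real_toNNReal]
  refine (integral_congr_ae (Filter.Eventually.of_forall fun y => ?_)).symm
  have hdy := hd_pos y
  rw [NNReal.smul_def, smul_eq_mul, Real.coe_toNNReal _ (div_nonneg hdy.le hηG_pos.le)]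
  rw [show (∫ z, G z * H z y ∂η) = d y from rfl]
  field_simp
end

section
/- Let (E_k)_{0≤k≤n} be measurable spaces, let Q_{k+1} and Q̂_{k+1} be bounded positive integral kernels from E_k to E_{k+1}, let f_k be bounded nonnegative measurable functions on E_k, and define v_k and v̂_k by the backward recursions v_n = v̂_n = f_n, v_k = f_k ∨ Q_{k+1}(v_{k+1}) and v̂_k = f_k ∨ Q̂_{k+1}(v̂_{k+1}). Then for every 0 ≤ k < n and every x ∈ E_k, |v_k(x) − v̂_k(x)| ≤ Σ_{l=k}^{n−1} Q̂_{k,l}( |(Q_{l+1} − Q̂_{l+1})(v_{l+1})| )(x), where Q̂_{k,l} := Q̂_{k+1}Q̂_{k+2}⋯Q̂_l with Q̂_{k,k} = Id. -/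
open MeasureTheory ProbabilityTheory

section Aux

variable {E : ℕ → Type*} [∀ k, MeasurableSpace (E k)]

lemma meas_kint {α β : Type*} [MeasurableSpace α] [MeasurableSpace β]
    (κ : Kernel α β) [IsFiniteKernel κ] {φ : β → ℝ} (hφ : Measurable φ) :
    Measurable fun x => ∫ y, φ y ∂(κ x) := by
  have h : StronglyMeasurable fun p : α × β => φ p.2 :=
    (hφ.comp measurable_snd).stronglyMeasurable
  exact h.integral_kernel_prod_right'.measurable

lemma int_bdd {β : Type*} [MeasurableSpace β] (μ : Measure β) [IsFiniteMeasure μ]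
    {φ : β → ℝ} {C : ℝ} (hφ : Measurable φ) (hb : ∀ y, |φ y| ≤ C) : Integrable φ μ :=
  (integrable_const C).mono' hφ.aestronglyMeasurable
    (ae_of_all _ fun y => by simpa [Real.norm_eq_abs] using hb y)

lemma abs_kint_le {α β : Type*} [MeasurableSpace α] [MeasurableSpace β]
    (κ : Kernel α β) [IsFiniteKernel κ] {φ : β → ℝ} {C : ℝ} (hC : 0 ≤ C)
    (hφ : Measurable φ) (hb : ∀ y, |φ y| ≤ C) (x : α) :
    |∫ y, φ y ∂(κ x)| ≤ C * (Kernel.bound κ).toReal := by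
  have h1 : |∫ y, φ y ∂(κ x)| ≤ ∫ y, |φ y| ∂(κ x) := by
    simpa [Real.norm_eq_abs] using norm_integral_le_integral_norm (μ := κ x) φ
  have h2 : ∫ y, |φ y| ∂(κ x) ≤ ∫ _, C ∂(κ x) :=
    integral_mono ((int_bdd (κ x) hφ hb).abs) (integrable_const C) hb
  have h3 : (∫ _, C ∂(κ x)) = ((κ x) Set.univ).toReal * C := by
    simp [integral_const, smul_eq_mul, Measure.real]
  have h4 : ((κ x) Set.univ).toReal ≤ (Kernel.bound κ).toReal :=
    ENNReal.toReal_mono (Kernel.bound_lt_top κ).ne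
      (Kernel.measure_le_bound κ x Set.univ)
  calc |∫ y, φ y ∂(κ x)| ≤ ∫ _, C ∂(κ x) := h1.trans h2
    _ = ((κ x) Set.univ).toReal * C := h3
    _ ≤ (Kernel.bound κ).toReal * C := by
        exact mul_le_mul_of_nonneg_right h4 hC
    _ = C * (Kernel.bound κ).toReal := mul_comm _ _

lemma kernelComp_meas_bdd (K : ∀ k, Kernel (E k) (E (k + 1))) [∀ k, IsFiniteKernel (K k)] :
    ∀ (j k : ℕ) (φ : E (k + j) → ℝ), Measurable φ → (∃ C, 0 ≤ C ∧ ∀ y, |φ y| ≤ C) →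
      Measurable (kernelComp K k j φ) ∧ ∃ C, 0 ≤ C ∧ ∀ x, |kernelComp K k j φ x| ≤ C := by
  intro j
  induction j with
  | zero => intro k φ hm hb; exact ⟨hm, hb⟩
  | succ j ih =>
    intro k φ hm hb
    obtain ⟨C, hC0, hC⟩ := hb
    have hm' : Measurable fun x : E (k + j) => ∫ y, φ y ∂(K (k + j) x) :=
      meas_kint (K (k + j)) hm
    have hb' : ∀ x, |∫ y, φ y ∂(K (k + j) x)| ≤
        C * (Kernel.bound (K (k + j))).toReal :=
      abs_kint_le (K (k + j)) hC0 hm hC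
    have := ih k (fun x => ∫ y, φ y ∂(K (k + j) x)) hm'
      ⟨_, mul_nonneg hC0 ENNReal.toReal_nonneg, hb'⟩
    simpa [kernelComp] using this

lemma kernelComp_succ (K : ∀ k, Kernel (E k) (E (k + 1))) :
    ∀ (j : ℕ) (Φ : ∀ m, E m → ℝ) (k : ℕ) (x : E k),
      kernelComp K k (j + 1) (Φ (k + j + 1)) x
        = ∫ y, kernelComp K (k + 1) j (Φ (k + 1 + j)) y ∂(K k x) := by
  intro j
  induction j with
  | zero => intro Φ k x; rfl
  | succ j ih =>
    intro Φ k x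
    exact ih (fun m x => ∫ y, Φ (m + 1) y ∂(K m x)) k x

lemma value_mb {n : ℕ} (K : ∀ k, Kernel (E k) (E (k + 1))) [∀ k, IsFiniteKernel (K k)]
    (f : ∀ k, E k → ℝ) (hf_meas : ∀ k, Measurable (f k))
    (hf_nonneg : ∀ k x, 0 ≤ f k x) (hf_bdd : ∀ k, ∃ C, ∀ x, f k x ≤ C)
    (v : ∀ k, E k → ℝ) (hterm : v n = f n)
    (hrec : ∀ k, k < n → ∀ x, v k x = max (f k x) (∫ y, v (k + 1) y ∂(K k x))) :
    ∀ (d k : ℕ), k + d = n → Measurable (v k) ∧ ∃ C, 0 ≤ C ∧ ∀ x, |v k x| ≤ C := by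
  intro d
  induction d with
  | zero =>
    intro k hk
    have hk' : k = n := by omega
    subst hk'
    rw [hterm]
    obtain ⟨C, hC⟩ := hf_bdd k
    refine ⟨hf_meas k, max C 0, le_max_right _ _, fun x => ?_⟩
    rw [abs_of_nonneg (hf_nonneg k x)]
    exact le_max_of_le_left (hC x)
  | succ d ih =>
    intro k hk
    have hkn : k < n := by omega
    obtain ⟨hm1, C1, hC10, hC1⟩ := ih (k + 1) (by omega)
    have hvk : v k = fun x => max (f k x) (∫ y, v (k + 1) y ∂(K k x)) :=
      funext (hrec k hkn)
    rw [hvk]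
    obtain ⟨Cf, hCf⟩ := hf_bdd k
    refine ⟨(hf_meas k).max (meas_kint (K k) hm1),
      max (max Cf 0) (C1 * (Kernel.bound (K k)).toReal),
      le_trans (le_max_right _ _) (le_max_left _ _), fun x => ?_⟩
    have h0 : 0 ≤ max (f k x) (∫ y, v (k + 1) y ∂(K k x)) :=
      le_trans (hf_nonneg k x) (le_max_left _ _)
    rw [abs_of_nonneg h0]
    refine max_le (le_max_of_le_left (le_max_of_le_left (hCf x))) ?_
    refine le_max_of_le_right ?_
    exact le_trans (le_abs_self _) (abs_kint_le (K k) hC10 hm1 hC1 x)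

/-- The "one-step deviation" function family. -/
noncomputable def snellG (Q Qhat : ∀ k, Kernel (E k) (E (k + 1)))
    (v : ∀ k, E k → ℝ) (l : ℕ) (y : E l) : ℝ :=
  |(∫ z, v (l + 1) z ∂(Q l y)) - ∫ z, v (l + 1) z ∂(Qhat l y)|

end Aux

/-- Robustness of the Snell envelope recursion with common gain functions `f_k` but two
different kernels `Q` and `Q̂`:
`|v_k(x) - v̂_k(x)| ≤ Σ_{l=k}^{n-1} Q̂_{k,l}(|(Q_{l+1} - Q̂_{l+1})(v_{l+1})|)(x)`. -/
theorem snell_robustness_same_gain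
    (E : ℕ → Type*) [∀ k, MeasurableSpace (E k)] (n : ℕ)
    (Q Qhat : ∀ k, Kernel (E k) (E (k + 1)))
    [∀ k, IsFiniteKernel (Q k)] [∀ k, IsFiniteKernel (Qhat k)]
    (f : ∀ k, E k → ℝ)
    (hf_meas : ∀ k, Measurable (f k)) (hf_nonneg : ∀ k x, 0 ≤ f k x)
    (hf_bdd : ∀ k, ∃ C, ∀ x, f k x ≤ C)
    (v vhat : ∀ k, E k → ℝ)
    (hv_term : v n = f n)
    (hv_rec : ∀ k, k < n → ∀ x, v k x = max (f k x) (∫ y, v (k + 1) y ∂(Q k x)))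
    (hvhat_term : vhat n = f n)
    (hvhat_rec : ∀ k, k < n →
      ∀ x, vhat k x = max (f k x) (∫ y, vhat (k + 1) y ∂(Qhat k x))) :
    ∀ k, k < n → ∀ x : E k,
      |v k x - vhat k x| ≤
        ∑ j ∈ Finset.range (n - k),
          kernelComp Qhat k j
            (fun y => |(∫ z, v (k + j + 1) z ∂(Q (k + j) y))
              - ∫ z, v (k + j + 1) z ∂(Qhat (k + j) y)|) x := by
  have hv_mb : ∀ k, k ≤ n → Measurable (v k) ∧ ∃ C, 0 ≤ C ∧ ∀ x, |v k x| ≤ C := fun k hk =>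
    value_mb Q f hf_meas hf_nonneg hf_bdd v hv_term hv_rec (n - k) k (by omega)
  have hvhat_mb : ∀ k, k ≤ n → Measurable (vhat k) ∧ ∃ C, 0 ≤ C ∧ ∀ x, |vhat k x| ≤ C :=
    fun k hk =>
    value_mb Qhat f hf_meas hf_nonneg hf_bdd vhat hvhat_term hvhat_rec (n - k) k (by omega)
  set G : ∀ l, E l → ℝ := snellG Q Qhat v with hGdef
  have hG_mb : ∀ l, l < n → Measurable (G l) ∧ ∃ C, 0 ≤ C ∧ ∀ y, |G l y| ≤ C := by
    intro l hl
    obtain ⟨hm, C, hC0, hC⟩ := hv_mb (l + 1) (by omega)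
    constructor
    · exact ((meas_kint (Q l) hm).sub (meas_kint (Qhat l) hm)).abs
    · refine ⟨C * (Kernel.bound (Q l)).toReal
        + C * (Kernel.bound (Qhat l)).toReal,
        add_nonneg (mul_nonneg hC0 ENNReal.toReal_nonneg)
          (mul_nonneg hC0 ENNReal.toReal_nonneg), fun y => ?_⟩
      simp only [hGdef, snellG, abs_abs]
      refine le_trans (abs_sub _ _) (add_le_add ?_ ?_)
      · exact abs_kint_le (Q l) hC0 hm hC y
      · exact abs_kint_le (Qhat l) hC0 hm hC y
  have main : ∀ (d k : ℕ), k + d = n → ∀ x : E k,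
      |v k x - vhat k x| ≤
        ∑ j ∈ Finset.range (n - k), kernelComp Qhat k j (G (k + j)) x := by
    intro d
    induction d with
    | zero =>
      intro k hk x
      have hk' : k = n := by omega
      subst hk'
      simp [hv_term, hvhat_term]
    | succ d ih =>
      intro k hk x
      have hkn : k < n := by omega
      obtain ⟨hmv, Cv, hCv0, hCv⟩ := hv_mb (k + 1) (by omega)
      obtain ⟨hmvh, Cvh, hCvh0, hCvh⟩ := hvhat_mb (k + 1) (by omega)
      -- integrability facts
      have hint_v : Integrable (v (k + 1)) (Qhat k x) := int_bdd _ hmv hCv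
      have hint_vh : Integrable (vhat (k + 1)) (Qhat k x) := int_bdd _ hmvh hCvh
      -- the sum function S at level k+1
      set S : E (k + 1) → ℝ :=
        fun y => ∑ j ∈ Finset.range (n - (k + 1)),
          kernelComp Qhat (k + 1) j (G (k + 1 + j)) y with hS
      have hterm_mb : ∀ j, j < n - (k + 1) →
          Measurable (kernelComp Qhat (k + 1) j (G (k + 1 + j))) ∧
          ∃ C, 0 ≤ C ∧ ∀ y, |kernelComp Qhat (k + 1) j (G (k + 1 + j)) y| ≤ C := by
        intro j hj
        obtain ⟨hm, hb⟩ := hG_mb (k + 1 + j) (by omega)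
        exact kernelComp_meas_bdd Qhat j (k + 1) (G (k + 1 + j)) hm hb
      have hint_terms : ∀ j ∈ Finset.range (n - (k + 1)),
          Integrable (kernelComp Qhat (k + 1) j (G (k + 1 + j))) (Qhat k x) := by
        intro j hj
        obtain ⟨hm, C, hC0, hC⟩ := hterm_mb j (Finset.mem_range.mp hj)
        exact int_bdd _ hm hC
      have hint_S : Integrable S (Qhat k x) := by
        rw [hS]
        exact integrable_finset_sum _ hint_terms
      have hint_abs : Integrable (fun y => |v (k + 1) y - vhat (k + 1) y|) (Qhat k x) :=
        (hint_v.sub hint_vh).abs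
      -- pointwise bound from induction hypothesis
      have hIH : ∀ y, |v (k + 1) y - vhat (k + 1) y| ≤ S y := by
        intro y
        exact ih (k + 1) (by omega) y
      -- step 1: pass through the max
      rw [hv_rec k hkn x, hvhat_rec k hkn x]
      have h1 : |max (f k x) (∫ y, v (k + 1) y ∂(Q k x))
            - max (f k x) (∫ y, vhat (k + 1) y ∂(Qhat k x))|
          ≤ |(∫ y, v (k + 1) y ∂(Q k x)) - ∫ y, vhat (k + 1) y ∂(Qhat k x)| := by
        simpa [max_comm] using
          abs_max_sub_max_le_abs (∫ y, v (k + 1) y ∂(Q k x))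
            (∫ y, vhat (k + 1) y ∂(Qhat k x)) (f k x)
      refine le_trans h1 ?_
      -- step 2: triangle inequality through the intermediate term
      have h2 : |(∫ y, v (k + 1) y ∂(Q k x)) - ∫ y, vhat (k + 1) y ∂(Qhat k x)|
          ≤ G k x + |(∫ y, v (k + 1) y ∂(Qhat k x)) - ∫ y, vhat (k + 1) y ∂(Qhat k x)| := by
        have := abs_sub_le (∫ y, v (k + 1) y ∂(Q k x)) (∫ y, v (k + 1) y ∂(Qhat k x))
          (∫ y, vhat (k + 1) y ∂(Qhat k x))
        simpa [hGdef, snellG] using this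
      refine le_trans h2 ?_
      -- step 3: bound the second term by the integral of S
      have h3 : |(∫ y, v (k + 1) y ∂(Qhat k x)) - ∫ y, vhat (k + 1) y ∂(Qhat k x)|
          ≤ ∫ y, S y ∂(Qhat k x) := by
        rw [← integral_sub hint_v hint_vh]
        refine le_trans ?_ (integral_mono hint_abs hint_S hIH)
        simpa [Real.norm_eq_abs] using
          norm_integral_le_integral_norm (μ := Qhat k x)
            (fun y => v (k + 1) y - vhat (k + 1) y)
      -- step 4: exchange integral and sum, and use kernelComp_succ
      have h4 : (∫ y, S y ∂(Qhat k x))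
          = ∑ j ∈ Finset.range (n - (k + 1)),
              kernelComp Qhat k (j + 1) (G (k + j + 1)) x := by
        rw [hS, integral_finset_sum _ hint_terms]
        refine Finset.sum_congr rfl fun j hj => ?_
        exact (kernelComp_succ Qhat j G k x).symm
      -- conclude
      have h5 : G k x + ∑ j ∈ Finset.range (n - (k + 1)),
            kernelComp Qhat k (j + 1) (G (k + j + 1)) x
          = ∑ j ∈ Finset.range (n - k), kernelComp Qhat k j (G (k + j)) x := by
        have hnk : n - k = (n - (k + 1)) + 1 := by omega
        rw [hnk, Finset.sum_range_succ', add_comm]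
        rfl
      calc G k x + |(∫ y, v (k + 1) y ∂(Qhat k x)) - ∫ y, vhat (k + 1) y ∂(Qhat k x)|
          ≤ G k x + ∫ y, S y ∂(Qhat k x) := by linarith
        _ = ∑ j ∈ Finset.range (n - k), kernelComp Qhat k j (G (k + j)) x := by
            rw [h4]; exact h5
  intro k hk x
  exact main (n - k) k (by omega) x
end

section
/- Let U be a nonnegative random variable and b < ∞ a constant such that E(U^r)^{1/r} ≤ a(r) · b for all integers r ≥ 1, where a(2m)^{2m} = (2m)_m 2^{−m} and a(2m+1)^{2m+1} = ((2m+1)_{m+1}/√(m+1/2)) 2^{−(m+1/2)}. Then for every t ≥ 0, E(e^{tU}) ≤ exp((bt)²/2 + bt). -/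
open MeasureTheory ProbabilityTheory

/-- The Khintchine-type constants `a(p)`, defined by
`a(2m)^{2m} = (2m)_m 2^{-m}` and `a(2m+1)^{2m+1} = ((2m+1)_{m+1}/√(m+1/2)) 2^{-(m+1/2)}`. -/
noncomputable def aConst (p : ℕ) : ℝ :=
  if Even p then
    ((p.descFactorial (p / 2) : ℝ) * (2 : ℝ) ^ (-(p : ℝ) / 2)) ^ ((p : ℝ)⁻¹)
  else
    ((p.descFactorial ((p + 1) / 2) : ℝ) / Real.sqrt ((p : ℝ) / 2)
        * (2 : ℝ) ^ (-(p : ℝ) / 2)) ^ ((p : ℝ)⁻¹)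

open Nat

lemma haEven (m : ℕ) (hm : 1 ≤ m) :
    aConst (2 * m) ^ (2 * m) = ((2 * m).descFactorial m : ℝ) * (1 / 2 : ℝ) ^ m := by
  rw [aConst, if_pos (even_two_mul m), show (2 * m) / 2 = m from by omega]
  have hbase : (0:ℝ) ≤ ((2 * m).descFactorial m : ℝ) * (2 : ℝ) ^ (-((2 * m : ℕ) : ℝ) / 2) := by
    positivity
  rw [Real.rpow_inv_natCast_pow hbase (by omega)]
  congr 1
  rw [show -(((2 * m : ℕ)) : ℝ) / 2 = -(m : ℝ) by push_cast; ring]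
  rw [Real.rpow_neg (by norm_num), Real.rpow_natCast, one_div, inv_pow]

lemma haOdd (m : ℕ) :
    aConst (2 * m + 1) ^ (2 * m + 1)
      ≤ ((2 * m + 1).descFactorial (m + 1) : ℝ) * (1 / 2 : ℝ) ^ m := by
  have hodd : ¬ Even (2 * m + 1) := by simp [Nat.even_add_one, parity_simps]
  rw [aConst, if_neg hodd, show (2 * m + 1 + 1) / 2 = m + 1 from by omega]
  have hbase : (0:ℝ) ≤ ((2 * m + 1).descFactorial (m + 1) : ℝ)
      / Real.sqrt (((2 * m + 1 : ℕ) : ℝ) / 2) * (2 : ℝ) ^ (-((2 * m + 1 : ℕ) : ℝ) / 2) := by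
    positivity
  rw [Real.rpow_inv_natCast_pow hbase (by omega)]
  have hdF : (0:ℝ) ≤ ((2 * m + 1).descFactorial (m + 1) : ℝ) := by positivity
  have hhalf : (2:ℝ) ^ (-(1/2 : ℝ)) = Real.sqrt (1/2) := by
    rw [Real.sqrt_eq_rpow, Real.rpow_neg (by norm_num : (0:ℝ) ≤ 2)]
    rw [← Real.inv_rpow (by norm_num : (0:ℝ) ≤ 2)]
    norm_num
  have h1 : (2:ℝ) ^ (-(1/2 : ℝ)) ≤ Real.sqrt (((2 * m + 1 : ℕ) : ℝ) / 2) := by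
    rw [hhalf]
    apply Real.sqrt_le_sqrt
    have : (1:ℝ) ≤ ((2 * m + 1 : ℕ) : ℝ) := by exact_mod_cast Nat.one_le_iff_ne_zero.mpr (by omega)
    linarith
  have h2 : ((2 * m + 1).descFactorial (m + 1) : ℝ) / Real.sqrt (((2 * m + 1 : ℕ) : ℝ) / 2)
      ≤ ((2 * m + 1).descFactorial (m + 1) : ℝ) / (2:ℝ) ^ (-(1/2 : ℝ)) :=
    div_le_div_of_nonneg_left hdF (Real.rpow_pos_of_pos (by norm_num) _) h1
  calc ((2 * m + 1).descFactorial (m + 1) : ℝ) / Real.sqrt (((2 * m + 1 : ℕ) : ℝ) / 2)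
        * (2 : ℝ) ^ (-((2 * m + 1 : ℕ) : ℝ) / 2)
      ≤ ((2 * m + 1).descFactorial (m + 1) : ℝ) / (2:ℝ) ^ (-(1/2 : ℝ))
        * (2 : ℝ) ^ (-((2 * m + 1 : ℕ) : ℝ) / 2) := by
        apply mul_le_mul_of_nonneg_right h2 (by positivity)
    _ = ((2 * m + 1).descFactorial (m + 1) : ℝ) * (1 / 2 : ℝ) ^ m := by
        rw [div_mul_eq_mul_div, mul_div_assoc, ← Real.rpow_sub (by norm_num : (0:ℝ) < 2)]
        congr 1
        rw [show -((2 * m + 1 : ℕ) : ℝ) / 2 - -(1/2 : ℝ) = -(m:ℝ) by push_cast; ring]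
        rw [Real.rpow_neg (by norm_num), Real.rpow_natCast, one_div, inv_pow]

lemma real_exp_tsum (y : ℝ) : Real.exp y = ∑' n : ℕ, y ^ n / n ! := by
  rw [Real.exp_eq_exp_ℝ, NormedSpace.exp_eq_tsum_div]

set_option maxHeartbeats 1000000 in
/-- If a nonnegative random variable `U` satisfies the moment bounds
`E(U^r)^{1/r} ≤ a(r)·b` for all integers `r ≥ 1`, then its moment generating function
satisfies `E(e^{tU}) ≤ exp((bt)²/2 + bt)` for every `t ≥ 0`. -/
theorem mgf_bound_of_khintchine_moments
    (Ω : Type*) [MeasurableSpace Ω] (P : Measure Ω) [IsProbabilityMeasure P]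
    (U : Ω → ℝ) (hU_meas : Measurable U) (hU_nonneg : ∀ ω, 0 ≤ U ω)
    (hU_int : ∀ r : ℕ, Integrable (fun ω => U ω ^ r) P)
    (b : ℝ)
    (hmom : ∀ r : ℕ, 1 ≤ r → (∫ ω, U ω ^ r ∂P) ^ ((r : ℝ)⁻¹) ≤ aConst r * b) :
    ∀ t : ℝ, 0 ≤ t →
      ∫ ω, Real.exp (t * U ω) ∂P ≤ Real.exp ((b * t) ^ 2 / 2 + b * t) := by
  intro t ht
  set x : ℝ := b * t with hxdef
  -- b is nonneg
  have hInt_nonneg : ∀ r : ℕ, 0 ≤ ∫ ω, U ω ^ r ∂P := fun r =>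
    integral_nonneg fun ω => pow_nonneg (hU_nonneg ω) r
  have hb : 0 ≤ b := by
    have h1 := hmom 1 le_rfl
    have h0 : (0:ℝ) ≤ (∫ ω, U ω ^ 1 ∂P) ^ ((1:ℕ):ℝ)⁻¹ := Real.rpow_nonneg (hInt_nonneg 1) _
    have ha1 : 0 < aConst 1 := by
      rw [aConst, if_neg (by norm_num)]
      apply Real.rpow_pos_of_pos
      have hs : (0:ℝ) < Real.sqrt (((1:ℕ):ℝ) / 2) := Real.sqrt_pos.mpr (by norm_num)
      have hd : (0:ℝ) < ((Nat.descFactorial 1 ((1 + 1) / 2) : ℕ) : ℝ) := by norm_num [Nat.descFactorial]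
      positivity
    nlinarith [le_trans h0 h1]
  have hx0 : 0 ≤ x := mul_nonneg hb ht
  -- moment bound in power form
  have hmom' : ∀ r : ℕ, 1 ≤ r → ∫ ω, U ω ^ r ∂P ≤ (aConst r * b) ^ r := by
    intro r hr
    calc ∫ ω, U ω ^ r ∂P = ((∫ ω, U ω ^ r ∂P) ^ ((r:ℝ)⁻¹)) ^ r :=
          (Real.rpow_inv_natCast_pow (hInt_nonneg r) (by omega)).symm
      _ ≤ (aConst r * b) ^ r :=
          pow_le_pow_left₀ (Real.rpow_nonneg (hInt_nonneg r) _) (hmom r hr) r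
  -- the series terms
  set F : ℕ → Ω → ℝ := fun n ω => (t * U ω) ^ n / n ! with hFdef
  have hFeq : ∀ n, F n = fun ω => (t ^ n / n !) * U ω ^ n := by
    intro n; funext ω; simp only [hFdef, mul_pow]; ring
  have hF_int : ∀ n, Integrable (F n) P := by
    intro n; rw [hFeq n]; exact (hU_int n).const_mul _
  have hF_nonneg : ∀ n ω, 0 ≤ F n ω := fun n ω =>
    div_nonneg (pow_nonneg (mul_nonneg ht (hU_nonneg ω)) n) (by positivity)
  have hI : ∀ n, ∫ ω, F n ω ∂P = (t ^ n / n !) * ∫ ω, U ω ^ n ∂P := by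
    intro n
    rw [show (fun ω => F n ω) = fun ω => (t ^ n / n !) * U ω ^ n from hFeq n]
    exact integral_const_mul _ _
  have hI_nonneg : ∀ n, 0 ≤ ∫ ω, F n ω ∂P := fun n =>
    integral_nonneg (hF_nonneg n)
  -- dominating sequence
  set A : ℕ → ℝ := fun m => (x ^ 2 / 2) ^ m / m ! with hAdef
  have hA_sum : Summable A := Real.summable_pow_div_factorial (x ^ 2 / 2)
  have hA_tsum : ∑' m, A m = Real.exp (x ^ 2 / 2) := (real_exp_tsum _).symm
  have hA_nonneg : ∀ m, 0 ≤ A m := fun m => by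
    have : (0:ℝ) ≤ x ^ 2 / 2 := by positivity
    positivity
  -- even bound
  have hEven : ∀ m : ℕ, ∫ ω, F (2 * m) ω ∂P ≤ A m := by
    intro m
    rcases Nat.eq_zero_or_pos m with rfl | hm
    · simp [hI 0, hAdef]
    · have hfac : ((2 * m)! : ℝ) = (m ! : ℝ) * ((2 * m).descFactorial m : ℝ) := by
        exact_mod_cast ((Nat.factorial_mul_descFactorial (by omega : m ≤ 2 * m)).symm.trans
          (by rw [show 2 * m - m = m by omega]))
      have hdFpos : (0:ℝ) < ((2 * m).descFactorial m : ℝ) := by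
        have : (2 * m).descFactorial m ≠ 0 := by
          rw [Ne, Nat.descFactorial_eq_zero_iff_lt]; omega
        exact_mod_cast Nat.pos_of_ne_zero this
      rw [hI]
      calc (t ^ (2 * m) / (2 * m)!) * ∫ ω, U ω ^ (2 * m) ∂P
          ≤ (t ^ (2 * m) / (2 * m)!) * (aConst (2 * m) * b) ^ (2 * m) := by
            apply mul_le_mul_of_nonneg_left (hmom' (2 * m) (by omega)) (by positivity)
        _ = A m := by
            simp only [hAdef]
            rw [mul_pow, haEven m hm, hfac, hxdef]
            have h2 : ((b*t)^2/2)^m = b^(2*m) * t^(2*m) * ((1:ℝ)/2)^m := by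
              rw [div_pow, ← pow_mul, mul_pow, one_div, inv_pow, div_eq_mul_inv]
            rw [h2]
            have hm0 : (m ! : ℝ) ≠ 0 := by positivity
            field_simp
  -- odd bound
  have hOdd : ∀ m : ℕ, ∫ ω, F (2 * m + 1) ω ∂P ≤ x * A m := by
    intro m
    have hfac : ((2 * m + 1)! : ℝ) = (m ! : ℝ) * ((2 * m + 1).descFactorial (m + 1) : ℝ) := by
      exact_mod_cast ((Nat.factorial_mul_descFactorial (by omega : m + 1 ≤ 2 * m + 1)).symm.trans
        (by rw [show 2 * m + 1 - (m + 1) = m by omega]))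
    have hdFpos : (0:ℝ) < ((2 * m + 1).descFactorial (m + 1) : ℝ) := by
      have : (2 * m + 1).descFactorial (m + 1) ≠ 0 := by
        rw [Ne, Nat.descFactorial_eq_zero_iff_lt]; omega
      exact_mod_cast Nat.pos_of_ne_zero this
    rw [hI]
    have hbpow : (aConst (2 * m + 1) * b) ^ (2 * m + 1)
        ≤ ((2 * m + 1).descFactorial (m + 1) : ℝ) * (1 / 2 : ℝ) ^ m * b ^ (2 * m + 1) := by
      rw [mul_pow]
      exact mul_le_mul_of_nonneg_right (haOdd m) (pow_nonneg hb _)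
    calc (t ^ (2 * m + 1) / (2 * m + 1)!) * ∫ ω, U ω ^ (2 * m + 1) ∂P
        ≤ (t ^ (2 * m + 1) / (2 * m + 1)!) * (aConst (2 * m + 1) * b) ^ (2 * m + 1) := by
          apply mul_le_mul_of_nonneg_left (hmom' (2 * m + 1) (by omega)) (by positivity)
      _ ≤ (t ^ (2 * m + 1) / (2 * m + 1)!)
            * (((2 * m + 1).descFactorial (m + 1) : ℝ) * (1 / 2 : ℝ) ^ m * b ^ (2 * m + 1)) := by
          apply mul_le_mul_of_nonneg_left hbpow (by positivity)
      _ = x * A m := by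
          simp only [hAdef]
          rw [hfac, hxdef]
          have h2 : ((b*t)^2/2)^m = b^(2*m) * t^(2*m) * ((1:ℝ)/2)^m := by
            rw [div_pow, ← pow_mul, mul_pow, one_div, inv_pow, div_eq_mul_inv]
          rw [h2]
          have hm0 : (m ! : ℝ) ≠ 0 := by positivity
          have hhm : ((1:ℝ)/2) ^ m * 2 ^ m = 1 := by
            rw [← mul_pow]; norm_num
          set D : ℝ := ((2 * m + 1).descFactorial (m + 1) : ℝ) with hD
          field_simp
          ring
  -- summability
  have hsE : Summable (fun m => ∫ ω, F (2 * m) ω ∂P) :=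
    Summable.of_nonneg_of_le (fun m => hI_nonneg _) hEven hA_sum
  have hsO : Summable (fun m => ∫ ω, F (2 * m + 1) ω ∂P) :=
    Summable.of_nonneg_of_le (fun m => hI_nonneg _) hOdd (hA_sum.mul_left x)
  have hs : Summable (fun n => ∫ ω, F n ω ∂P) := Summable.even_add_odd hsE hsO
  -- swap integral and sum
  have hswap : ∑' n, ∫ ω, F n ω ∂P = ∫ ω, Real.exp (t * U ω) ∂P := by
    rw [integral_tsum_of_summable_integral_norm hF_int ?_]
    · congr 1; funext ω
      rw [real_exp_tsum (t * U ω)]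
    · have : (fun n => ∫ ω, ‖F n ω‖ ∂P) = fun n => ∫ ω, F n ω ∂P := by
        funext n; congr 1; funext ω; exact Real.norm_of_nonneg (hF_nonneg n ω)
      rw [this]; exact hs
  -- final chain
  rw [← hswap, ← tsum_even_add_odd hsE hsO]
  have h1 : ∑' m, ∫ ω, F (2 * m) ω ∂P ≤ Real.exp (x ^ 2 / 2) := by
    rw [← hA_tsum]; exact Summable.tsum_le_tsum hEven hsE hA_sum
  have h2 : ∑' m, ∫ ω, F (2 * m + 1) ω ∂P ≤ x * Real.exp (x ^ 2 / 2) := by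
    rw [← hA_tsum, ← tsum_mul_left]
    exact Summable.tsum_le_tsum hOdd hsO (hA_sum.mul_left x)
  have h3 : Real.exp (x ^ 2 / 2) + x * Real.exp (x ^ 2 / 2) ≤ Real.exp (x ^ 2 / 2 + x) := by
    rw [Real.exp_add]
    have := Real.add_one_le_exp x
    nlinarith [Real.exp_pos (x ^ 2 / 2)]
  calc (∑' m, ∫ ω, F (2 * m) ω ∂P) + ∑' m, ∫ ω, F (2 * m + 1) ω ∂P
      ≤ Real.exp (x ^ 2 / 2) + x * Real.exp (x ^ 2 / 2) := add_le_add h1 h2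
    _ ≤ Real.exp (x ^ 2 / 2 + x) := h3
    _ = Real.exp ((b * t) ^ 2 / 2 + b * t) := by rw [hxdef]
end

section
/- Let U be a nonnegative random variable and b < ∞ a constant such that E(U^r)^{1/r} ≤ a(r) · b for all integers r ≥ 1, where a(2m)^{2m} = (2m)_m 2^{−m} and a(2m+1)^{2m+1} = ((2m+1)_{m+1}/√(m+1/2)) 2^{−(m+1/2)}. Then for every ε > 0, P(U ≥ b + ε) ≤ exp(−ε²/(2b²)). -/
open MeasureTheory ProbabilityTheory
open scoped Nat ENNReal

private lemma exp_eq_tsum_pow_div (z : ℝ) : Real.exp z = ∑' r : ℕ, z ^ r / r ! := by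
  rw [Real.exp_eq_exp_ℝ, NormedSpace.exp_eq_tsum_div]

private lemma descFactorial_two_mul_real (m : ℕ) :
    ((2 * m).descFactorial m : ℝ) = (2 * m)! / m ! := by
  have h := Nat.factorial_mul_descFactorial (show m ≤ 2 * m by omega)
  rw [show 2 * m - m = m by omega] at h
  have h' : (((2 * m).descFactorial m : ℝ)) * (m ! : ℝ) = ((2 * m)! : ℝ) := by
    rw [mul_comm]; exact_mod_cast congrArg (Nat.cast (R := ℝ)) h
  rw [eq_div_iff (by exact_mod_cast m.factorial_pos.ne')]
  exact h'

private lemma descFactorial_two_mul_add_one_real (m : ℕ) :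
    ((2 * m + 1).descFactorial (m + 1) : ℝ) = (2 * m + 1)! / m ! := by
  have h := Nat.factorial_mul_descFactorial (show m + 1 ≤ 2 * m + 1 by omega)
  rw [show 2 * m + 1 - (m + 1) = m by omega] at h
  have h' : (((2 * m + 1).descFactorial (m + 1) : ℝ)) * (m ! : ℝ) = ((2 * m + 1)! : ℝ) := by
    rw [mul_comm]; exact_mod_cast congrArg (Nat.cast (R := ℝ)) h
  rw [eq_div_iff (by exact_mod_cast m.factorial_pos.ne')]
  exact h'

/-- If a nonnegative random variable `U` satisfies the moment bounds
`E(U^r)^{1/r} ≤ a(r)·b` for all integers `r ≥ 1`, then it satisfies the exponential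
concentration inequality `P(U ≥ b + ε) ≤ exp(-ε²/(2b²))` for every `ε > 0`. -/
theorem concentration_of_khintchine_moments
    (Ω : Type*) [MeasurableSpace Ω] (P : Measure Ω) [IsProbabilityMeasure P]
    (U : Ω → ℝ) (hU_meas : Measurable U) (hU_nonneg : ∀ ω, 0 ≤ U ω)
    (hU_int : ∀ r : ℕ, Integrable (fun ω => U ω ^ r) P)
    (b : ℝ)
    (hmom : ∀ r : ℕ, 1 ≤ r → (∫ ω, U ω ^ r ∂P) ^ ((r : ℝ)⁻¹) ≤ aConst r * b) :
    ∀ ε : ℝ, 0 < ε →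
      (P {ω | b + ε ≤ U ω}).toReal ≤ Real.exp (-ε ^ 2 / (2 * b ^ 2)) := by
  intro ε hε
  have hI_nonneg : ∀ r : ℕ, 0 ≤ ∫ ω, U ω ^ r ∂P := fun r =>
    integral_nonneg fun ω => pow_nonneg (hU_nonneg ω) r
  -- `b` is nonnegative
  have haC1 : 0 < aConst 1 := by
    rw [aConst, if_neg (by simp)]
    apply Real.rpow_pos_of_pos
    have h1 : ((1 + 1 : ℕ) / 2 : ℕ) = 1 := by norm_num
    rw [h1, Nat.descFactorial_one]
    have hs : 0 < Real.sqrt ((1 : ℕ) / 2) := Real.sqrt_pos.mpr (by norm_num)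
    positivity
  have hb0 : 0 ≤ b := by
    have h := hmom 1 le_rfl
    simp only [Nat.cast_one, inv_one, Real.rpow_one, pow_one] at h
    have h0 : (0 : ℝ) ≤ aConst 1 * b := le_trans (by simpa using hI_nonneg 1) h
    by_contra hb
    push_neg at hb
    nlinarith
  rcases hb0.eq_or_lt with hb | hb
  · -- case b = 0 : the right-hand side is exp(-ε²/0) = exp 0 = 1
    rw [← hb]
    norm_num
    exact le_trans (ENNReal.toReal_mono ENNReal.one_ne_top prob_le_one) (by simp)
  · -- main case b > 0
    have hbne : b ≠ 0 := ne_of_gt hb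
    set l : ℝ := ε / b ^ 2 with hl_def
    set x : ℝ := ε / b with hx_def
    set y : ℝ := x ^ 2 / 2 with hy_def
    have hlpos : 0 < l := by positivity
    have hxpos : 0 < x := by positivity
    have hynn : 0 ≤ y := by positivity
    have hlb : l * b = x := by
      rw [hl_def, hx_def, div_mul_eq_mul_div, pow_two, mul_div_mul_right _ _ hbne]
    -- moments bounds in power form
    have hIle : ∀ r : ℕ, 1 ≤ r → ∫ ω, U ω ^ r ∂P ≤ aConst r ^ r * b ^ r := by
      intro r hr
      have h := hmom r hr
      have h0 : (0 : ℝ) ≤ ∫ ω, U ω ^ r ∂P := hI_nonneg r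
      have h2 := pow_le_pow_left₀ (Real.rpow_nonneg h0 _) h r
      rwa [Real.rpow_inv_natCast_pow h0 (by omega), mul_pow] at h2
    -- value of aConst on even numbers
    have haEven : ∀ m : ℕ, aConst (2 * m) ^ (2 * m)
        = ((2 * m).descFactorial m : ℝ) * ((2 : ℝ) ^ m)⁻¹ := by
      intro m
      rcases Nat.eq_zero_or_pos m with hm | hm
      · subst hm; simp [aConst]
      have hev : Even (2 * m) := even_two_mul m
      have hb0' : (0 : ℝ) ≤ ((2 * m).descFactorial ((2 * m) / 2) : ℝ)
          * (2 : ℝ) ^ (-((2 * m : ℕ) : ℝ) / 2) := by positivity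
      rw [aConst, if_pos hev, Real.rpow_inv_natCast_pow hb0' (by omega)]
      congr 1
      · rw [Nat.mul_div_cancel_left m (by norm_num)]
      · rw [show -((2 * m : ℕ) : ℝ) / 2 = -(m : ℝ) by push_cast; ring,
          Real.rpow_neg (by norm_num), Real.rpow_natCast]
    -- upper bound for aConst on odd numbers
    have haOdd : ∀ m : ℕ, aConst (2 * m + 1) ^ (2 * m + 1)
        ≤ ((2 * m + 1).descFactorial (m + 1) : ℝ) * ((2 : ℝ) ^ m)⁻¹ := by
      intro m
      have hodd : ¬ Even (2 * m + 1) := by simp [Nat.even_add_one, parity_simps]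
      have hb0' : (0 : ℝ) ≤ ((2 * m + 1).descFactorial ((2 * m + 1 + 1) / 2) : ℝ)
          / Real.sqrt (((2 * m + 1 : ℕ) : ℝ) / 2)
          * (2 : ℝ) ^ (-((2 * m + 1 : ℕ) : ℝ) / 2) := by positivity
      rw [aConst, if_neg hodd, Real.rpow_inv_natCast_pow hb0' (by omega)]
      rw [show (2 * m + 1 + 1) / 2 = m + 1 by omega]
      -- bound the square root from below
      have hs2 : (0:ℝ) < Real.sqrt 2 := by positivity
      have hsqrt : (Real.sqrt 2)⁻¹ ≤ Real.sqrt (((2 * m + 1 : ℕ) : ℝ) / 2) := by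
        rw [show (Real.sqrt 2)⁻¹ = Real.sqrt 2⁻¹ by rw [Real.sqrt_inv]]
        apply Real.sqrt_le_sqrt
        push_cast
        rw [inv_eq_one_div, div_le_div_iff₀ (by norm_num) (by norm_num)]
        nlinarith [Nat.cast_nonneg (α := ℝ) m]
      have hsqrtpos : 0 < Real.sqrt (((2 * m + 1 : ℕ) : ℝ) / 2) := by
        refine lt_of_lt_of_le (by positivity) hsqrt
      have hdiv : ((2 * m + 1).descFactorial (m + 1) : ℝ)
          / Real.sqrt (((2 * m + 1 : ℕ) : ℝ) / 2)
          ≤ ((2 * m + 1).descFactorial (m + 1) : ℝ) * Real.sqrt 2 := by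
        rw [div_le_iff₀ hsqrtpos]
        calc ((2 * m + 1).descFactorial (m + 1) : ℝ)
            = ((2 * m + 1).descFactorial (m + 1) : ℝ) * Real.sqrt 2 * (Real.sqrt 2)⁻¹ := by
              field_simp
          _ ≤ ((2 * m + 1).descFactorial (m + 1) : ℝ) * Real.sqrt 2
              * Real.sqrt (((2 * m + 1 : ℕ) : ℝ) / 2) := by
              apply mul_le_mul_of_nonneg_left hsqrt
              positivity
      have hrpow : Real.sqrt 2 * (2 : ℝ) ^ (-((2 * m + 1 : ℕ) : ℝ) / 2) = ((2 : ℝ) ^ m)⁻¹ := by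
        rw [show Real.sqrt 2 = (2:ℝ) ^ ((1:ℝ)/2) by
            rw [Real.sqrt_eq_rpow],
          ← Real.rpow_add (by norm_num)]
        rw [show (1:ℝ)/2 + -((2 * m + 1 : ℕ) : ℝ) / 2 = -(m:ℝ) by push_cast; ring]
        rw [Real.rpow_neg (by norm_num), Real.rpow_natCast]
      calc ((2 * m + 1).descFactorial (m + 1) : ℝ)
            / Real.sqrt (((2 * m + 1 : ℕ) : ℝ) / 2)
            * (2 : ℝ) ^ (-((2 * m + 1 : ℕ) : ℝ) / 2)
          ≤ ((2 * m + 1).descFactorial (m + 1) : ℝ) * Real.sqrt 2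
            * (2 : ℝ) ^ (-((2 * m + 1 : ℕ) : ℝ) / 2) := by
            apply mul_le_mul_of_nonneg_right hdiv
            positivity
        _ = ((2 * m + 1).descFactorial (m + 1) : ℝ) * ((2 : ℝ) ^ m)⁻¹ := by
            rw [mul_assoc, hrpow]
    -- per-term bounds on the exponential series
    have hterm_even : ∀ m : ℕ,
        l ^ (2 * m) / (2 * m)! * (∫ ω, U ω ^ (2 * m) ∂P) ≤ y ^ m / m ! := by
      intro m
      rcases Nat.eq_zero_or_pos m with hm | hm
      · subst hm; simp
      have h1 := hIle (2 * m) (by omega)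
      rw [haEven m, descFactorial_two_mul_real m] at h1
      have h2 : l ^ (2 * m) / (2 * m)! * (∫ ω, U ω ^ (2 * m) ∂P)
          ≤ l ^ (2 * m) / (2 * m)! * ((2 * m)! / m ! * ((2 : ℝ) ^ m)⁻¹ * b ^ (2 * m)) := by
        apply mul_le_mul_of_nonneg_left h1 (by positivity)
      refine h2.trans_eq ?_
      have hfact1 : (0:ℝ) < ((2 * m)! : ℝ) := by exact_mod_cast (2*m).factorial_pos
      have hfact2 : (0:ℝ) < (m ! : ℝ) := by exact_mod_cast m.factorial_pos
      rw [hy_def, ← hlb]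
      field_simp
      have h2m : ((1:ℝ) / 2) ^ m * (2:ℝ) ^ m = 1 := by rw [← mul_pow]; norm_num
      linear_combination (-(l ^ (2 * m) * b ^ (2 * m))) * h2m
    have hterm_odd : ∀ m : ℕ,
        l ^ (2 * m + 1) / (2 * m + 1)! * (∫ ω, U ω ^ (2 * m + 1) ∂P)
          ≤ x * (y ^ m / m !) := by
      intro m
      have h1 := hIle (2 * m + 1) (by omega)
      have h1' : ∫ ω, U ω ^ (2 * m + 1) ∂P
          ≤ ((2 * m + 1)! / m ! * ((2 : ℝ) ^ m)⁻¹) * b ^ (2 * m + 1) := by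
        refine h1.trans ?_
        apply mul_le_mul_of_nonneg_right _ (by positivity)
        rw [← descFactorial_two_mul_add_one_real m]
        exact haOdd m
      have h2 : l ^ (2 * m + 1) / (2 * m + 1)! * (∫ ω, U ω ^ (2 * m + 1) ∂P)
          ≤ l ^ (2 * m + 1) / (2 * m + 1)!
            * (((2 * m + 1)! / m ! * ((2 : ℝ) ^ m)⁻¹) * b ^ (2 * m + 1)) := by
        apply mul_le_mul_of_nonneg_left h1' (by positivity)
      refine h2.trans_eq ?_
      have hfact1 : (0:ℝ) < ((2 * m + 1)! : ℝ) := by exact_mod_cast (2*m+1).factorial_pos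
      have hfact2 : (0:ℝ) < (m ! : ℝ) := by exact_mod_cast m.factorial_pos
      rw [hy_def, ← hlb]
      field_simp
      have h2m : ((1:ℝ) / 2) ^ m * (2:ℝ) ^ m = 1 := by rw [← mul_pow]; norm_num
      linear_combination (-(l ^ (2 * m + 1) * b ^ (2 * m + 1))) * h2m
    -- each series term integrates nicely
    have hIr : ∀ r : ℕ, ∫⁻ ω, ENNReal.ofReal ((l * U ω) ^ r / r !) ∂P
        = ENNReal.ofReal (l ^ r / r ! * ∫ ω, U ω ^ r ∂P) := by
      intro r
      have hfun : ∀ ω, (l * U ω) ^ r / (r ! : ℝ) = (l ^ r / r !) * U ω ^ r := by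
        intro ω; rw [mul_pow]; ring
      simp_rw [hfun]
      rw [← ofReal_integral_eq_lintegral_ofReal ((hU_int r).const_mul _)
        (ae_of_all _ fun ω => mul_nonneg (by positivity) (pow_nonneg (hU_nonneg ω) r)),
        integral_const_mul]
    -- the key bound on the Laplace transform, as a Lebesgue integral
    have key : ∫⁻ ω, ENNReal.ofReal (Real.exp (l * U ω)) ∂P
        ≤ ENNReal.ofReal ((1 + x) * Real.exp y) := by
      have hpt : ∀ ω, ENNReal.ofReal (Real.exp (l * U ω))
          = ∑' r : ℕ, ENNReal.ofReal ((l * U ω) ^ r / r !) := by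
        intro ω
        rw [exp_eq_tsum_pow_div (l * U ω), ENNReal.ofReal_tsum_of_nonneg
          (fun r => div_nonneg (pow_nonneg (mul_nonneg hlpos.le (hU_nonneg ω)) r)
            (by positivity))
          (Real.summable_pow_div_factorial _)]
      calc ∫⁻ ω, ENNReal.ofReal (Real.exp (l * U ω)) ∂P
          = ∫⁻ ω, ∑' r : ℕ, ENNReal.ofReal ((l * U ω) ^ r / r !) ∂P := by
            simp_rw [hpt]
        _ = ∑' r : ℕ, ∫⁻ ω, ENNReal.ofReal ((l * U ω) ^ r / r !) ∂P := by
            apply lintegral_tsum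
            intro r
            exact (((hU_meas.const_mul l).pow_const r).div_const _).ennreal_ofReal.aemeasurable
        _ = ∑' r : ℕ, ENNReal.ofReal (l ^ r / r ! * ∫ ω, U ω ^ r ∂P) := by
            simp_rw [hIr]
        _ = (∑' m : ℕ, ENNReal.ofReal (l ^ (2 * m) / (2 * m)! * ∫ ω, U ω ^ (2 * m) ∂P))
            + ∑' m : ℕ, ENNReal.ofReal
              (l ^ (2 * m + 1) / (2 * m + 1)! * ∫ ω, U ω ^ (2 * m + 1) ∂P) := by
            exact (tsum_even_add_odd ENNReal.summable ENNReal.summable).symm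
        _ ≤ (∑' m : ℕ, ENNReal.ofReal (y ^ m / m !))
            + ∑' m : ℕ, ENNReal.ofReal (x * (y ^ m / m !)) := by
            refine add_le_add (ENNReal.tsum_le_tsum fun m => ?_)
              (ENNReal.tsum_le_tsum fun m => ?_)
            · exact ENNReal.ofReal_le_ofReal (hterm_even m)
            · exact ENNReal.ofReal_le_ofReal (hterm_odd m)
        _ = ENNReal.ofReal (Real.exp y) + ENNReal.ofReal (x * Real.exp y) := by
            congr 1
            · rw [← ENNReal.ofReal_tsum_of_nonneg (fun m => by positivity)
                (Real.summable_pow_div_factorial y), ← exp_eq_tsum_pow_div y]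
            · rw [← ENNReal.ofReal_tsum_of_nonneg
                (fun m => mul_nonneg hxpos.le (by positivity))
                ((Real.summable_pow_div_factorial y).mul_left x)]
              rw [tsum_mul_left, ← exp_eq_tsum_pow_div y]
        _ = ENNReal.ofReal ((1 + x) * Real.exp y) := by
            rw [← ENNReal.ofReal_add (by positivity) (mul_nonneg hxpos.le (by positivity))]
            congr 1
            ring
    -- integrability of the exponential
    have hint_exp : Integrable (fun ω => Real.exp (l * U ω)) P := by
      refine ⟨(Real.measurable_exp.comp (hU_meas.const_mul l)).aestronglyMeasurable, ?_⟩
      rw [hasFiniteIntegral_iff_ofReal (ae_of_all _ fun ω => (Real.exp_pos _).le)]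
      exact lt_of_le_of_lt key ENNReal.ofReal_lt_top
    -- bound on the mgf
    have hmgf : mgf U P l ≤ (1 + x) * Real.exp y := by
      have h := ofReal_integral_eq_lintegral_ofReal hint_exp
        (ae_of_all _ fun ω => (Real.exp_pos _).le)
      have h2 : ENNReal.ofReal (∫ ω, Real.exp (l * U ω) ∂P)
          ≤ ENNReal.ofReal ((1 + x) * Real.exp y) := h ▸ key
      have h3 := (ENNReal.ofReal_le_ofReal_iff (by positivity)).mp h2
      simpa [mgf] using h3
    -- Chernoff bound and conclusion
    calc (P {ω | b + ε ≤ U ω}).toReal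
        ≤ Real.exp (-l * (b + ε)) * mgf U P l :=
          measure_ge_le_exp_mul_mgf (b + ε) hlpos.le hint_exp
      _ ≤ Real.exp (-l * (b + ε)) * ((1 + x) * Real.exp y) := by
          apply mul_le_mul_of_nonneg_left hmgf (Real.exp_pos _).le
      _ ≤ Real.exp (-l * (b + ε)) * (Real.exp x * Real.exp y) := by
          apply mul_le_mul_of_nonneg_left _ (Real.exp_pos _).le
          apply mul_le_mul_of_nonneg_right _ (Real.exp_pos _).le
          linarith [Real.add_one_le_exp x]
      _ = Real.exp (-l * (b + ε) + x + y) := by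
          rw [← Real.exp_add, ← Real.exp_add, add_assoc]
      _ = Real.exp (-ε ^ 2 / (2 * b ^ 2)) := by
          congr 1
          rw [hl_def, hy_def, hx_def]
          field_simp [hbne]
          ring
end

section
/- In the particle approximation scheme for the Snell envelope (Markov kernels M_{k+1}(x,dy) = H_{k+1}(x,y)λ_{k+1}(dy) with strictly positive densities, bounded nonnegative f_k, G_k, Q_{k+1}(f) := G_k · M_{k+1}(f), Φ_{k+1}(η)(f) := η(G_k M_{k+1}(f))/η(G_k); η^N_{k+1} the empirical measure of N samples that are conditionally i.i.d. with law Φ_{k+1}(η^N_k) given 𝓕^N_k; random kernels Q̂_{k+1}(x, dy) := η^N_{k+1}(dy)·G_k(x)H_{k+1}(x,y)η^N_k(G_k)/η^N_k(G_k H_{k+1}(·,y)); and backward recursions v_n = v̂_n = f_n, v_k = f_k ∨ Q_{k+1}(v_{k+1}), v̂_k = f_k ∨ Q̂_{k+1}(v̂_{k+1})), the particle estimator over-estimates the Snell envelope: for every 0 ≤ k ≤ n and every x_k ∈ E_k, E(v̂_k(x_k)) ≥ v_k(x_k). -/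
open MeasureTheory ProbabilityTheory ENNReal
set_option maxHeartbeats 2000000

private lemma ennreal_cancel {a c z : ℝ≥0∞} (ha0 : a ≠ 0) (hat : a ≠ ⊤)
    (hc0 : c ≠ 0) (hct : c ≠ ⊤) : a / c * (z * c / a) = z := by
  rw [div_eq_mul_inv, div_eq_mul_inv]
  have h : a * c⁻¹ * (z * c * a⁻¹) = z * (a * a⁻¹) * (c * c⁻¹) := by ring
  rw [h, ENNReal.mul_inv_cancel ha0 hat, ENNReal.mul_inv_cancel hc0 hct, mul_one, mul_one]

/-- Freezing lemma: if the conditional law of `X` given the sub-σ-algebra `m` has density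
`d ω y` with respect to `lam` (in the sense of `hbase`), then for any jointly
`m ⊗ mβ`-measurable nonnegative function `g`, the expectation of `g ω (X ω)` is computed
by integrating against the density. -/
theorem freezing {Ω β : Type*} [m : MeasurableSpace Ω] [mβ : MeasurableSpace β]
    (mΩ : {t : MeasurableSpace Ω // m ≤ t}) (P : @MeasureTheory.Measure Ω mΩ.1)
    (hP : @IsProbabilityMeasure Ω mΩ.1 P)
    (lam : MeasureTheory.Measure β) [SigmaFinite lam]
    (d : Ω → β → ENNReal) (hd : Measurable (Function.uncurry d))
    (hd1 : ∀ ω, ∫⁻ y, d ω y ∂lam = 1)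
    (X : Ω → β) (hX : @Measurable Ω β mΩ.1 mβ X)
    (hbase : ∀ B, MeasurableSet B → ∀ A, MeasurableSet A →
      P (A ∩ X ⁻¹' B) = ∫⁻ ω in A, ∫⁻ y in B, d ω y ∂lam ∂P)
    (g : Ω → β → ENNReal) (hg : Measurable (Function.uncurry g)) :
    ∫⁻ ω, g ω (X ω) ∂P = ∫⁻ ω, ∫⁻ y, d ω y * g ω y ∂lam ∂P := by
  classical
  -- the kernel with density `d`
  have hdsec : ∀ ω, Measurable (d ω) := fun ω =>
    hd.comp measurable_prodMk_left
  set κ : Kernel Ω β :=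
    { toFun := fun ω => lam.withDensity (d ω)
      measurable' := by
        refine Measure.measurable_of_measurable_coe _ fun s hs => ?_
        simp_rw [withDensity_apply _ hs]
        simp_rw [← lintegral_indicator hs]
        have heq : (fun p : Ω × β => s.indicator (d p.1) p.2)
            = (Set.univ ×ˢ s).indicator (Function.uncurry d) := by
          ext p
          by_cases h : p.2 ∈ s <;>
            simp [Set.indicator, h, Function.uncurry]
        exact Measurable.lintegral_prod_right'
          (f := fun p : Ω × β => s.indicator (d p.1) p.2)
          (by rw [heq]; exact hd.indicator (MeasurableSet.univ.prod hs)) } with hκ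
  have hκapp : ∀ ω, κ ω = lam.withDensity (d ω) := fun ω => rfl
  haveI hmk : IsMarkovKernel κ := by
    refine ⟨fun ω => ⟨?_⟩⟩
    rw [hκapp, withDensity_apply _ MeasurableSet.univ, setLIntegral_univ, hd1]
  haveI : IsProbabilityMeasure (P.trim mΩ.2) :=
    ⟨by rw [trim_measurableSet_eq mΩ.2 MeasurableSet.univ]; exact measure_univ⟩
  set emb : Ω → Ω × β := fun ω => (ω, X ω) with hembdef
  have hemb : @Measurable Ω (Ω × β) mΩ.1 _ emb :=
    Measurable.prodMk (measurable_id'' mΩ.2) hX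
  have h12 : @Measure.map Ω (Ω × β) mΩ.1 _ emb P = (P.trim mΩ.2) ⊗ₘ κ := by
    haveI : IsProbabilityMeasure (@Measure.map Ω (Ω × β) mΩ.1 _ emb P) :=
      Measure.isProbabilityMeasure_map hemb.aemeasurable
    refine ext_of_generate_finite _ generateFrom_prod.symm isPiSystem_prod
      (fun s hs => ?_) (by simp [measure_univ])
    obtain ⟨A, hA, B, hB, rfl⟩ := hs
    simp only [Set.mem_setOf_eq] at hA hB
    have hABm : MeasurableSet (A ×ˢ B) := hA.prod hB
    have h1 : (@Measure.map Ω (Ω × β) mΩ.1 _ emb P) (A ×ˢ B) = P (A ∩ X ⁻¹' B) := by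
      rw [Measure.map_apply hemb hABm]
      have : emb ⁻¹' (A ×ˢ B) = A ∩ X ⁻¹' B := by
        ext ω
        simp [hembdef, Set.mem_prod]
      rw [this]
    have h2 : ((P.trim mΩ.2) ⊗ₘ κ) (A ×ˢ B) = ∫⁻ ω in A, ∫⁻ y in B, d ω y ∂lam ∂P := by
      rw [Measure.compProd_apply hABm]
      have hpre : ∀ ω, κ ω (Prod.mk ω ⁻¹' A ×ˢ B)
          = A.indicator (fun ω => ∫⁻ y in B, d ω y ∂lam) ω := by
        intro ω
        by_cases hω : ω ∈ A
        · rw [Set.mk_preimage_prod_right hω, Set.indicator_of_mem hω,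
            hκapp, withDensity_apply _ hB]
        · rw [Set.mk_preimage_prod_right_eq_empty hω, Set.indicator_of_notMem hω,
            measure_empty]
      rw [lintegral_congr hpre]
      have hmeas : Measurable fun ω => ∫⁻ y in B, d ω y ∂lam := by
        simp_rw [← lintegral_indicator hB]
        have heq : (fun p : Ω × β => B.indicator (d p.1) p.2)
            = (Set.univ ×ˢ B).indicator (Function.uncurry d) := by
          ext p
          by_cases h : p.2 ∈ B <;> simp [Set.indicator, h, Function.uncurry]
        exact Measurable.lintegral_prod_right'
          (f := fun p : Ω × β => B.indicator (d p.1) p.2)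
          (by rw [heq]; exact hd.indicator (MeasurableSet.univ.prod hB))
      rw [lintegral_trim mΩ.2 (hmeas.indicator hA), lintegral_indicator (mΩ.2 A hA)]
    rw [h1, h2, hbase B hB A hA]
  have hgemb : ∀ ω, Function.uncurry g (emb ω) = g ω (X ω) := fun ω => rfl
  calc ∫⁻ ω, g ω (X ω) ∂P
      = ∫⁻ p, Function.uncurry g p ∂(@Measure.map Ω (Ω × β) mΩ.1 _ emb P) := by
        rw [@lintegral_map Ω (Ω × β) mΩ.1 _ P _ _ hg hemb]
        rfl
    _ = ∫⁻ p, Function.uncurry g p ∂((P.trim mΩ.2) ⊗ₘ κ) := by rw [h12]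
    _ = ∫⁻ ω, ∫⁻ y, g ω y ∂(κ ω) ∂(P.trim mΩ.2) := by
        rw [Measure.lintegral_compProd hg]
        rfl
    _ = ∫⁻ ω, ∫⁻ y, d ω y * g ω y ∂lam ∂(P.trim mΩ.2) := by
        refine lintegral_congr fun ω => ?_
        rw [hκapp]
        rw [lintegral_withDensity_eq_lintegral_mul lam (hdsec ω)
          (show Measurable (fun y => g ω y) from hg.comp measurable_prodMk_left)]
        rfl
    _ = ∫⁻ ω, ∫⁻ y, d ω y * g ω y ∂lam ∂P := by
        refine lintegral_trim mΩ.2 ?_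
        exact Measurable.lintegral_prod_right' (f := fun p : Ω × β => d p.1 p.2 * g p.1 p.2)
          (hd.mul hg)

open MeasureTheory ProbabilityTheory

/-- The particle (stochastic mesh) estimator of the Snell envelope is high biased: for every
`0 ≤ k ≤ n` and every `x ∈ E_k`, `E(v̂_k(x)) ≥ v_k(x)`. -/
theorem particle_snell_overestimates
    (E : ℕ → Type*) [∀ k, MeasurableSpace (E k)] [∀ k, Nonempty (E k)]
    (n : ℕ) (N : ℕ) (hN : 1 ≤ N)
    -- the Markov transitions `M_{k+1}(x,dy) = H_{k+1}(x,y) λ_{k+1}(dy)`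
    (lam : ∀ k, Measure (E (k + 1))) [∀ k, SigmaFinite (lam k)]
    (H : ∀ k, E k → E (k + 1) → ℝ)
    (hH_meas : ∀ k, Measurable (Function.uncurry (H k)))
    (hH_pos : ∀ k x y, 0 < H k x y)
    (hMarkov : ∀ k x, ∫ y, H k x y ∂(lam k) = 1)
    -- the gain functions and potential functions
    (f G : ∀ k, E k → ℝ)
    (hf_meas : ∀ k, Measurable (f k)) (hG_meas : ∀ k, Measurable (G k))
    (hf_nonneg : ∀ k x, 0 ≤ f k x) (hG_nonneg : ∀ k x, 0 ≤ G k x)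
    (hf_bdd : ∀ k, ∃ C, ∀ x, f k x ≤ C)
    -- the particle model: a filtered probability space
    (Ω : Type*) [mΩ : MeasurableSpace Ω] (P : Measure Ω) [IsProbabilityMeasure P]
    (F : ℕ → MeasurableSpace Ω) (hF_le : ∀ k, F k ≤ mΩ) (hF_mono : Monotone F)
    (ξ : ∀ k, Fin N → Ω → E k)
    (hξ_meas : ∀ k i, Measurable (ξ k i))
    (hξ_adapted : ∀ k i, Measurable[F k] (ξ k i))
    -- the initial particles are i.i.d. with law `η_0`
    (η0 : Measure (E 0)) [IsProbabilityMeasure η0]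
    (hinit : ∀ g : Fin N → E 0 → ℝ, (∀ i, Measurable (g i)) → (∀ i, ∃ C, ∀ x, |g i x| ≤ C) →
      ∫ ω, ∏ i : Fin N, g i (ξ 0 i ω) ∂P = ∏ i : Fin N, ∫ x, g i x ∂η0)
    -- non-degeneracy: `η^N_k(G_k) > 0`
    (hGpos : ∀ k, k ≤ n → ∀ ω, 0 < ∑ i : Fin N, G k (ξ k i ω))
    -- conditionally on `𝓕^N_k`, the particles `ξ^i_{k+1}` are i.i.d. with law `Φ_{k+1}(η^N_k)`
    (hcond : ∀ k, k < n → ∀ g : Fin N → E (k + 1) → ℝ,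
      (∀ i, Measurable (g i)) → (∀ i, ∃ C, ∀ y, |g i y| ≤ C) →
      P[(fun ω => ∏ i : Fin N, g i (ξ (k + 1) i ω)) | F k]
        =ᵐ[P] fun ω => ∏ i : Fin N,
          (∑ j : Fin N, G k (ξ k j ω) * ∫ y, H k (ξ k j ω) y * g i y ∂(lam k))
            / (∑ j : Fin N, G k (ξ k j ω)))
    -- the Snell envelope `v_k = f_k ∨ Q_{k+1}(v_{k+1})`
    (v : ∀ k, E k → ℝ)
    (hv_term : v n = f n)
    (hv_rec : ∀ k, k < n → ∀ x,
      v k x = max (f k x) (G k x * ∫ y, H k x y * v (k + 1) y ∂(lam k)))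
    -- its particle approximation `v̂_k = f_k ∨ Q̂_{k+1}(v̂_{k+1})`
    (vhat : ∀ k, Ω → E k → ℝ)
    (hvhat_term : ∀ ω, vhat n ω = f n)
    (hvhat_rec : ∀ k, k < n → ∀ ω x,
      vhat k ω x = max (f k x)
        ((N : ℝ)⁻¹ * ∑ i : Fin N,
          G k x * H k x (ξ (k + 1) i ω)
            * (∑ j : Fin N, G k (ξ k j ω))
            / (∑ j : Fin N, G k (ξ k j ω) * H k (ξ k j ω) (ξ (k + 1) i ω))
            * vhat (k + 1) ω (ξ (k + 1) i ω)))
    -- integrability of the estimator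
    (hvhat_int : ∀ k (x : E k), Integrable (fun ω => vhat k ω x) P) :
    ∀ k, k ≤ n → ∀ x : E k, v k x ≤ ∫ ω, vhat k ω x ∂P := by

  classical
  have hNR : (0:ℝ) < N := by exact_mod_cast Nat.lt_of_lt_of_le Nat.zero_lt_one hN
  have hN0 : (N : ℝ≥0∞) ≠ 0 := by
    simp only [ne_eq, Nat.cast_eq_zero]
    omega
  have hNtop : (N : ℝ≥0∞) ≠ ⊤ := ENNReal.natCast_ne_top N
  -- H is integrable with unit mass
  have hH_int : ∀ k x, Integrable (fun y => H k x y) (lam k) := by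
    intro k x
    by_contra h
    have h1 := hMarkov k x
    rw [integral_undef h] at h1
    norm_num at h1
  have hHy_meas : ∀ k x, Measurable (fun y => H k x y) := fun k x =>
    (hH_meas k).comp measurable_prodMk_left
  have hHl1 : ∀ k x, ∫⁻ y, ENNReal.ofReal (H k x y) ∂lam k = 1 := by
    intro k x
    rw [← ofReal_integral_eq_lintegral_ofReal (hH_int k x)
      (Filter.Eventually.of_forall fun y => (hH_pos k x y).le), hMarkov, ENNReal.ofReal_one]
  -- sums of G in ℝ≥0∞
  have hSG_eq : ∀ k ω, ENNReal.ofReal (∑ j : Fin N, G k (ξ k j ω))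
      = ∑ j : Fin N, ENNReal.ofReal (G k (ξ k j ω)) := fun k ω =>
    ENNReal.ofReal_sum_of_nonneg (fun j _ => hG_nonneg k _)
  have hSG_ne0 : ∀ k, k ≤ n → ∀ ω, (∑ j : Fin N, ENNReal.ofReal (G k (ξ k j ω))) ≠ 0 := by
    intro k hk ω
    rw [← hSG_eq k ω]
    exact (ENNReal.ofReal_pos.mpr (hGpos k hk ω)).ne'
  have hSG_top : ∀ k ω, (∑ j : Fin N, ENNReal.ofReal (G k (ξ k j ω))) ≠ ⊤ := by
    intro k ω
    exact (ENNReal.sum_lt_top.mpr fun j _ => ENNReal.ofReal_lt_top).ne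
  have hSH_pos : ∀ k, k ≤ n → ∀ ω (y : E (k+1)),
      0 < ∑ j : Fin N, G k (ξ k j ω) * H k (ξ k j ω) y := by
    intro k hk ω y
    obtain ⟨j0, hj0⟩ : ∃ j0, 0 < G k (ξ k j0 ω) := by
      by_contra h
      push_neg at h
      exact absurd (hGpos k hk ω) (not_lt.mpr (Finset.sum_nonpos fun j _ => h j))
    refine lt_of_lt_of_le (mul_pos hj0 (hH_pos k (ξ k j0 ω) y)) ?_
    exact Finset.single_le_sum (f := fun j => G k (ξ k j ω) * H k (ξ k j ω) y)
      (fun j _ => mul_nonneg (hG_nonneg k _) (hH_pos k _ y).le) (Finset.mem_univ j0)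
  -- nonnegativity
  have hfvh : ∀ k, k ≤ n → ∀ ω x, f k x ≤ vhat k ω x := by
    intro k hk ω x
    rcases lt_or_eq_of_le hk with h | h
    · rw [hvhat_rec k h ω x]; exact le_max_left _ _
    · subst h; rw [hvhat_term ω]
  have hvh0 : ∀ k, k ≤ n → ∀ ω x, 0 ≤ vhat k ω x :=
    fun k hk ω x => le_trans (hf_nonneg k x) (hfvh k hk ω x)
  have hv0 : ∀ k, k ≤ n → ∀ x, 0 ≤ v k x := by
    intro k hk x
    rcases lt_or_eq_of_le hk with h | h
    · rw [hv_rec k h x]; exact le_trans (hf_nonneg k x) (le_max_left _ _)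
    · subst h; rw [hv_term]; exact hf_nonneg k x
  -- measurability of the integral operator
  have hIv : ∀ k, Measurable (v (k+1)) →
      Measurable (fun x => ∫ y, H k x y * v (k+1) y ∂lam k) := by
    intro k h
    exact (((hH_meas k).mul (h.comp measurable_snd)).stronglyMeasurable.integral_prod_right').measurable
  -- measurability of `v` (backward induction)
  have hv_meas : ∀ d k, n = k + d → Measurable (v k) := by
    intro d
    induction d with
    | zero =>
      intro k hk
      have : k = n := by omega
      subst this
      rw [hv_term]; exact hf_meas k
    | succ d ih =>
      intro k hk
      have hkn : k < n := by omega
      have h1 : Measurable (v (k+1)) := ih (k+1) (by omega)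
      have heq : v k = fun x => max (f k x) (G k x * ∫ y, H k x y * v (k + 1) y ∂lam k) :=
        funext (hv_rec k hkn)
      rw [heq]
      exact (hf_meas k).max ((hG_meas k).mul (hIv k h1))
  -- joint measurability of `vhat` (backward induction)
  have hvh_meas : ∀ d k, n = k + d → Measurable (Function.uncurry (vhat k)) := by
    intro d
    induction d with
    | zero =>
      intro k hk
      have : k = n := by omega
      subst this
      have heq : Function.uncurry (vhat k) = fun p : Ω × E k => f k p.2 := by
        funext p
        simp [Function.uncurry, hvhat_term p.1]
      rw [heq]
      exact (hf_meas k).comp measurable_snd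
    | succ d ih =>
      intro k hk
      have hkn : k < n := by omega
      have h1 : Measurable (Function.uncurry (vhat (k+1))) := ih (k+1) (by omega)
      have heq : Function.uncurry (vhat k) = fun p : Ω × E k =>
          max (f k p.2)
            ((N : ℝ)⁻¹ * ∑ i : Fin N,
              G k p.2 * H k p.2 (ξ (k + 1) i p.1)
                * (∑ j : Fin N, G k (ξ k j p.1))
                / (∑ j : Fin N, G k (ξ k j p.1) * H k (ξ k j p.1) (ξ (k + 1) i p.1))
                * vhat (k + 1) p.1 (ξ (k + 1) i p.1)) := by
        funext p
        exact hvhat_rec k hkn p.1 p.2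
      rw [heq]
      refine ((hf_meas k).comp measurable_snd).max (Measurable.const_mul ?_ _)
      refine Finset.measurable_sum _ fun i _ => ?_
      have hm1 : Measurable fun p : Ω × E k => G k p.2 := (hG_meas k).comp measurable_snd
      have hm2 : Measurable fun p : Ω × E k => H k p.2 (ξ (k + 1) i p.1) :=
        (hH_meas k).comp (measurable_snd.prodMk ((hξ_meas (k+1) i).comp measurable_fst))
      have hm3 : Measurable fun p : Ω × E k => ∑ j : Fin N, G k (ξ k j p.1) :=
        Finset.measurable_sum _ fun j _ => (hG_meas k).comp ((hξ_meas k j).comp measurable_fst)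
      have hm4 : Measurable fun p : Ω × E k =>
          ∑ j : Fin N, G k (ξ k j p.1) * H k (ξ k j p.1) (ξ (k + 1) i p.1) :=
        Finset.measurable_sum _ fun j _ =>
          ((hG_meas k).comp ((hξ_meas k j).comp measurable_fst)).mul
            ((hH_meas k).comp (((hξ_meas k j).comp measurable_fst).prodMk
              ((hξ_meas (k+1) i).comp measurable_fst)))
      have hm5 : Measurable fun p : Ω × E k => vhat (k + 1) p.1 (ξ (k + 1) i p.1) :=
        h1.comp (measurable_fst.prodMk ((hξ_meas (k+1) i).comp measurable_fst))
      exact (((hm1.mul hm2).mul hm3).div hm4).mul hm5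
  -- the rectangle identity for the conditional law of `ξ_{k+1}^i` given `F k`
  haveI hPtrim : ∀ k, IsProbabilityMeasure (P.trim (hF_le k)) := fun k =>
    ⟨by rw [trim_measurableSet_eq (hF_le k) MeasurableSet.univ]; exact measure_univ⟩
  have hbase0 : ∀ k, k < n → ∀ i : Fin N, ∀ B : Set (E (k+1)), MeasurableSet B →
      ∀ A : Set Ω, MeasurableSet[F k] A →
      P (A ∩ (ξ (k+1) i) ⁻¹' B) = ∫⁻ ω in A, ∫⁻ y in B,
        (∑ j : Fin N, ENNReal.ofReal (G k (ξ k j ω)) * ENNReal.ofReal (H k (ξ k j ω) y))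
          / (∑ j : Fin N, ENNReal.ofReal (G k (ξ k j ω))) ∂lam k ∂P := by
    intro k hk i B hB A hA
    set g0 : E (k+1) → ℝ := B.indicator 1 with hg0
    have hg0m : Measurable g0 := measurable_one.indicator hB
    have hg0b : ∀ y, |g0 y| ≤ 1 := by
      intro y
      by_cases h : y ∈ B <;> simp [hg0, Set.indicator, h]
    have hg0nn : ∀ y, 0 ≤ g0 y := by
      intro y
      by_cases h : y ∈ B <;> simp [hg0, Set.indicator, h]
    -- apply `hcond` with the vector which is `g0` in slot `i` and `1` elsewhere
    have hcond' := hcond k hk (fun i' => if i' = i then g0 else fun _ => 1)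
      (fun i' => by by_cases h : i' = i <;> simp [h, hg0m])
      (fun i' => ⟨1, fun y => by by_cases h : i' = i <;> simp [h, hg0b y]⟩)
    have hprod1 : (fun ω => ∏ i' : Fin N,
        (if i' = i then g0 else fun _ => 1) (ξ (k + 1) i' ω)) = fun ω => g0 (ξ (k+1) i ω) := by
      funext ω
      rw [Finset.prod_eq_single_of_mem i (Finset.mem_univ i) (fun b _ hb => by simp [hb])]
      simp
    have hprod2 : (fun ω => ∏ i' : Fin N,
        (∑ j : Fin N, G k (ξ k j ω) * ∫ y, H k (ξ k j ω) y
          * (if i' = i then g0 else fun _ => 1) y ∂lam k) / (∑ j : Fin N, G k (ξ k j ω)))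
        = fun ω => (∑ j : Fin N, G k (ξ k j ω) * ∫ y, H k (ξ k j ω) y * g0 y ∂lam k)
          / (∑ j : Fin N, G k (ξ k j ω)) := by
      funext ω
      rw [Finset.prod_eq_single_of_mem i (Finset.mem_univ i) (fun b _ hb => by
        simp only [if_neg hb]
        simp only [mul_one, hMarkov]
        rw [div_self (ne_of_gt (hGpos k hk.le ω))])]
      simp
    rw [hprod1, hprod2] at hcond'
    have hint : Integrable (fun ω => g0 (ξ (k+1) i ω)) P := by
      have heq : (fun ω => g0 (ξ (k+1) i ω))
          = ((ξ (k+1) i) ⁻¹' B).indicator (fun _ => (1:ℝ)) := by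
        funext ω
        by_cases h : ξ (k+1) i ω ∈ B <;> simp [hg0, Set.indicator, h]
      rw [heq]
      exact (integrable_const 1).indicator (hξ_meas (k+1) i hB)
    have hreal : ∫ ω in A, g0 (ξ (k+1) i ω) ∂P
        = ∫ ω in A, (∑ j : Fin N, G k (ξ k j ω) * ∫ y, H k (ξ k j ω) y * g0 y ∂lam k)
          / (∑ j : Fin N, G k (ξ k j ω)) ∂P := by
      rw [← setIntegral_condExp (hF_le k) hint hA]
      exact integral_congr_ae (Filter.EventuallyEq.restrict hcond')
    -- left side
    have hL : P (A ∩ (ξ (k+1) i) ⁻¹' B) = ENNReal.ofReal (∫ ω in A, g0 (ξ (k+1) i ω) ∂P) := by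
      have heq : (fun ω => g0 (ξ (k+1) i ω))
          = ((ξ (k+1) i) ⁻¹' B).indicator (fun _ => (1:ℝ)) := by
        funext ω
        by_cases h : ξ (k+1) i ω ∈ B <;> simp [hg0, Set.indicator, h]
      rw [heq, integral_indicator (hξ_meas (k+1) i hB), setIntegral_const, measureReal_def,
        Measure.restrict_apply (hξ_meas (k+1) i hB), Set.inter_comm, smul_eq_mul, mul_one,
        ENNReal.ofReal_toReal (measure_ne_top P _)]
    -- right side: pointwise identification of the density integral
    have hbj : ∀ ω j, ∫ y, H k (ξ k j ω) y * g0 y ∂lam k = ∫ y in B, H k (ξ k j ω) y ∂lam k := by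
      intro ω j
      have heq : (fun y => H k (ξ k j ω) y * g0 y) = B.indicator (fun y => H k (ξ k j ω) y) := by
        funext y
        by_cases h : y ∈ B <;> simp [hg0, Set.indicator, h]
      rw [heq, integral_indicator hB]
    have hphi_nonneg : ∀ ω, 0 ≤ (∑ j : Fin N, G k (ξ k j ω) * ∫ y, H k (ξ k j ω) y * g0 y ∂lam k)
        / (∑ j : Fin N, G k (ξ k j ω)) := by
      intro ω
      refine div_nonneg (Finset.sum_nonneg fun j _ => mul_nonneg (hG_nonneg k _) ?_)
        (hGpos k hk.le ω).le
      rw [hbj ω j]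
      exact setIntegral_nonneg hB fun y _ => (hH_pos k _ y).le
    have hphi_le1 : ∀ ω, (∑ j : Fin N, G k (ξ k j ω) * ∫ y, H k (ξ k j ω) y * g0 y ∂lam k)
        / (∑ j : Fin N, G k (ξ k j ω)) ≤ 1 := by
      intro ω
      rw [div_le_one (hGpos k hk.le ω)]
      refine Finset.sum_le_sum fun j _ => ?_
      have h1 : ∫ y, H k (ξ k j ω) y * g0 y ∂lam k ≤ 1 := by
        rw [← hMarkov k (ξ k j ω)]
        refine integral_mono ?_ (hH_int k _) ?_
        · refine Integrable.mono' (hH_int k (ξ k j ω))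
            ((hHy_meas k (ξ k j ω)).mul hg0m).aestronglyMeasurable
            (Filter.Eventually.of_forall fun y => ?_)
          rw [Real.norm_eq_abs, abs_mul, abs_of_pos (hH_pos k _ y), abs_of_nonneg (hg0nn y)]
          calc H k (ξ k j ω) y * g0 y ≤ H k (ξ k j ω) y * 1 :=
                mul_le_mul_of_nonneg_left (abs_le.mp (hg0b y)).2 (hH_pos k _ y).le
            _ = H k (ξ k j ω) y := mul_one _
        · intro y
          calc H k (ξ k j ω) y * g0 y ≤ H k (ξ k j ω) y * 1 :=
                mul_le_mul_of_nonneg_left (abs_le.mp (hg0b y)).2 (hH_pos k _ y).le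
            _ = H k (ξ k j ω) y := mul_one _
      calc G k (ξ k j ω) * ∫ y, H k (ξ k j ω) y * g0 y ∂lam k
          ≤ G k (ξ k j ω) * 1 := mul_le_mul_of_nonneg_left h1 (hG_nonneg k _)
        _ = G k (ξ k j ω) := mul_one _
    have hphi_meas : Measurable fun ω =>
        (∑ j : Fin N, G k (ξ k j ω) * ∫ y, H k (ξ k j ω) y * g0 y ∂lam k)
          / (∑ j : Fin N, G k (ξ k j ω)) := by
      refine Measurable.div ?_ (Finset.measurable_sum _ fun j _ => (hG_meas k).comp (hξ_meas k j))
      refine Finset.measurable_sum _ fun j _ => ((hG_meas k).comp (hξ_meas k j)).mul ?_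
      have hm : Measurable fun x : E k => ∫ y, H k x y * g0 y ∂lam k :=
        (((hH_meas k).mul (hg0m.comp measurable_snd)).stronglyMeasurable.integral_prod_right').measurable
      exact hm.comp (hξ_meas k j)
    have hphi_int : IntegrableOn (fun ω =>
        (∑ j : Fin N, G k (ξ k j ω) * ∫ y, H k (ξ k j ω) y * g0 y ∂lam k)
          / (∑ j : Fin N, G k (ξ k j ω))) A P := by
      refine Integrable.mono' (integrable_const 1) hphi_meas.aestronglyMeasurable
        (Filter.Eventually.of_forall fun ω => ?_)
      rw [Real.norm_eq_abs, abs_of_nonneg (hphi_nonneg ω)]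
      exact hphi_le1 ω
    have hpoint : ∀ ω, ENNReal.ofReal
        ((∑ j : Fin N, G k (ξ k j ω) * ∫ y, H k (ξ k j ω) y * g0 y ∂lam k)
          / (∑ j : Fin N, G k (ξ k j ω)))
        = ∫⁻ y in B,
          (∑ j : Fin N, ENNReal.ofReal (G k (ξ k j ω)) * ENNReal.ofReal (H k (ξ k j ω) y))
            / (∑ j : Fin N, ENNReal.ofReal (G k (ξ k j ω))) ∂lam k := by
      intro ω
      have hRHS : ∫⁻ y in B,
          (∑ j : Fin N, ENNReal.ofReal (G k (ξ k j ω)) * ENNReal.ofReal (H k (ξ k j ω) y))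
            / (∑ j : Fin N, ENNReal.ofReal (G k (ξ k j ω))) ∂lam k
          = (∑ j : Fin N, ENNReal.ofReal (G k (ξ k j ω))
              * ∫⁻ y in B, ENNReal.ofReal (H k (ξ k j ω) y) ∂lam k)
            * (∑ j : Fin N, ENNReal.ofReal (G k (ξ k j ω)))⁻¹ := by
        simp_rw [div_eq_mul_inv]
        rw [lintegral_mul_const' _ _ (ENNReal.inv_ne_top.mpr (hSG_ne0 k hk.le ω))]
        congr 1
        rw [lintegral_finset_sum _ fun j _ =>
          (show Measurable fun y => ENNReal.ofReal (G k (ξ k j ω))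
              * ENNReal.ofReal (H k (ξ k j ω) y) from
            (ENNReal.measurable_ofReal.comp (hHy_meas k (ξ k j ω))).const_mul _)]
        exact Finset.sum_congr rfl fun j _ => lintegral_const_mul _
          (show Measurable fun y => ENNReal.ofReal (H k (ξ k j ω) y) from
            ENNReal.measurable_ofReal.comp (hHy_meas k (ξ k j ω)))
      rw [hRHS, ENNReal.ofReal_div_of_pos (hGpos k hk.le ω), div_eq_mul_inv, hSG_eq k ω]
      congr 1
      rw [ENNReal.ofReal_sum_of_nonneg (fun j _ => mul_nonneg (hG_nonneg k _) (by
        rw [hbj ω j]; exact setIntegral_nonneg hB fun y _ => (hH_pos k _ y).le))]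
      refine Finset.sum_congr rfl fun j _ => ?_
      rw [ENNReal.ofReal_mul (hG_nonneg k _)]
      congr 1
      rw [hbj ω j, ofReal_integral_eq_lintegral_ofReal ((hH_int k _).integrableOn)
        (Filter.Eventually.of_forall fun y => (hH_pos k _ y).le)]
    calc P (A ∩ (ξ (k+1) i) ⁻¹' B)
        = ENNReal.ofReal (∫ ω in A, g0 (ξ (k+1) i ω) ∂P) := hL
      _ = ENNReal.ofReal (∫ ω in A,
            (∑ j : Fin N, G k (ξ k j ω) * ∫ y, H k (ξ k j ω) y * g0 y ∂lam k)
              / (∑ j : Fin N, G k (ξ k j ω)) ∂P) := by rw [hreal]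
      _ = ∫⁻ ω in A, ENNReal.ofReal
            ((∑ j : Fin N, G k (ξ k j ω) * ∫ y, H k (ξ k j ω) y * g0 y ∂lam k)
              / (∑ j : Fin N, G k (ξ k j ω))) ∂P :=
          ofReal_integral_eq_lintegral_ofReal hphi_int
            (Filter.Eventually.of_forall fun ω => hphi_nonneg ω)
      _ = ∫⁻ ω in A, ∫⁻ y in B,
            (∑ j : Fin N, ENNReal.ofReal (G k (ξ k j ω)) * ENNReal.ofReal (H k (ξ k j ω) y))
              / (∑ j : Fin N, ENNReal.ofReal (G k (ξ k j ω))) ∂lam k ∂P :=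
          lintegral_congr fun ω => hpoint ω
  -- the central backward induction
  have S : ∀ d k, n = k + d →
      ∀ Z : Ω → ℝ≥0∞, Measurable[F k] Z →
      ∀ Y : Ω → E k, Measurable[F k] Y →
      ∫⁻ ω, Z ω * ENNReal.ofReal (v k (Y ω)) ∂P
        ≤ ∫⁻ ω, Z ω * ENNReal.ofReal (vhat k ω (Y ω)) ∂P := by
    intro d
    induction d with
    | zero =>
      intro k hkd Z hZ Y hY
      have hkn : k = n := by omega
      subst hkn
      refine le_of_eq (lintegral_congr fun ω => ?_)
      rw [hv_term, hvhat_term]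
    | succ d ih =>
      intro k hkd Z hZ Y hY
      have hk : k < n := by omega
      have hk1 : n = (k + 1) + d := by omega
      have hYm : Measurable Y := hY.mono (hF_le k) le_rfl
      have hZm : Measurable Z := hZ.mono (hF_le k) le_rfl
      have hvk1_meas : Measurable (v (k+1)) := hv_meas d (k+1) hk1
      have hQmeas : Measurable (fun x : E k => G k x
          * ∫ y, H k x y * v (k + 1) y ∂lam k) :=
        (hG_meas k).mul (hIv k hvk1_meas)
      -- indicator functions of the continuation region
      set c1 : E k → ℝ≥0∞ := fun x =>
        if f k x < G k x * ∫ y, H k x y * v (k + 1) y ∂lam k then 0 else 1 with hc1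
      set c2 : E k → ℝ≥0∞ := fun x =>
        if f k x < G k x * ∫ y, H k x y * v (k + 1) y ∂lam k then 1 else 0 with hc2
      have hc1m : Measurable c1 :=
        Measurable.ite (measurableSet_lt (hf_meas k) hQmeas) measurable_const measurable_const
      have hc2m : Measurable c2 :=
        Measurable.ite (measurableSet_lt (hf_meas k) hQmeas) measurable_const measurable_const
      set Zc : Ω → ℝ≥0∞ := fun ω => Z ω * c2 (Y ω) with hZc
      have hZcf : Measurable[F k] Zc := hZ.mul (hc2m.comp hY)
      have hvhYm : Measurable fun ω => vhat k ω (Y ω) :=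
        (hvh_meas (d+1) k hkd).comp (measurable_id.prodMk hYm)
      -- the key inequality for the continuation part
      have hkey : ∫⁻ ω, Zc ω * ENNReal.ofReal
            (G k (Y ω) * ∫ y, H k (Y ω) y * v (k + 1) y ∂lam k) ∂P
          ≤ ∫⁻ ω, Zc ω * ENNReal.ofReal
            ((N : ℝ)⁻¹ * ∑ i : Fin N,
              G k (Y ω) * H k (Y ω) (ξ (k + 1) i ω)
                * (∑ j : Fin N, G k (ξ k j ω))
                / (∑ j : Fin N, G k (ξ k j ω) * H k (ξ k j ω) (ξ (k + 1) i ω))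
                * vhat (k + 1) ω (ξ (k + 1) i ω)) ∂P := by
        have hle : k ≤ n := hk.le
        set w : Ω → E (k+1) → ℝ≥0∞ := fun ω y =>
          ENNReal.ofReal (G k (Y ω) * H k (Y ω) y * (∑ j : Fin N, G k (ξ k j ω))
            / (∑ j : Fin N, G k (ξ k j ω) * H k (ξ k j ω) y)) with hwdef
        set dens : Ω → E (k+1) → ℝ≥0∞ := fun ω y =>
          (∑ j : Fin N, ENNReal.ofReal (G k (ξ k j ω)) * ENNReal.ofReal (H k (ξ k j ω) y))
            / (∑ j : Fin N, ENNReal.ofReal (G k (ξ k j ω))) with hdensdef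
        -- measurability of `w` and `dens` with respect to `F k ⊗ E_{k+1}`
        have hGYm : Measurable[(F k).prod inferInstance]
            (fun p : Ω × E (k+1) => G k (Y p.1)) :=
          (hG_meas k).comp (hY.comp measurable_fst)
        have hHYm : Measurable[(F k).prod inferInstance]
            (fun p : Ω × E (k+1) => H k (Y p.1) p.2) :=
          (hH_meas k).comp ((hY.comp measurable_fst).prodMk measurable_snd)
        have hSGm : Measurable[(F k).prod inferInstance]
            (fun p : Ω × E (k+1) => ∑ j : Fin N, G k (ξ k j p.1)) :=
          Finset.measurable_sum _ fun j _ => (hG_meas k).comp ((hξ_adapted k j).comp measurable_fst)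
        have hSHm : Measurable[(F k).prod inferInstance]
            (fun p : Ω × E (k+1) => ∑ j : Fin N, G k (ξ k j p.1) * H k (ξ k j p.1) p.2) :=
          Finset.measurable_sum _ fun j _ =>
            ((hG_meas k).comp ((hξ_adapted k j).comp measurable_fst)).mul
              ((hH_meas k).comp (((hξ_adapted k j).comp measurable_fst).prodMk measurable_snd))
        have hwm : Measurable[(F k).prod inferInstance] (Function.uncurry w) := by
          simp only [hwdef]
          exact ENNReal.measurable_ofReal.comp ((((hGYm.mul hHYm).mul hSGm)).div hSHm)
        have hdm : Measurable[(F k).prod inferInstance] (Function.uncurry dens) := by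
          simp only [hdensdef]
          refine Measurable.div ?_ ?_
          · exact Finset.measurable_sum _ fun j _ =>
              ((ENNReal.measurable_ofReal.comp ((hG_meas k).comp
                ((hξ_adapted k j).comp measurable_fst)))).mul
                (ENNReal.measurable_ofReal.comp ((hH_meas k).comp
                  (((hξ_adapted k j).comp measurable_fst).prodMk measurable_snd)))
          · exact Finset.measurable_sum _ fun j _ =>
              ENNReal.measurable_ofReal.comp ((hG_meas k).comp
                ((hξ_adapted k j).comp measurable_fst))
        -- `dens` is a probability density
        have hd1 : ∀ ω, ∫⁻ y, dens ω y ∂lam k = 1 := by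
          intro ω
          simp only [hdensdef]
          simp_rw [div_eq_mul_inv]
          rw [lintegral_mul_const' _ _ (ENNReal.inv_ne_top.mpr (hSG_ne0 k hle ω))]
          rw [lintegral_finset_sum _ fun j _ =>
            (show Measurable fun y => ENNReal.ofReal (G k (ξ k j ω))
                * ENNReal.ofReal (H k (ξ k j ω) y) from
              (ENNReal.measurable_ofReal.comp (hHy_meas k (ξ k j ω))).const_mul _)]
          have hsum : ∀ j : Fin N, ∫⁻ y, ENNReal.ofReal (G k (ξ k j ω))
              * ENNReal.ofReal (H k (ξ k j ω) y) ∂lam k = ENNReal.ofReal (G k (ξ k j ω)) := by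
            intro j
            rw [lintegral_const_mul _ (show Measurable fun y =>
              ENNReal.ofReal (H k (ξ k j ω) y) from
                ENNReal.measurable_ofReal.comp (hHy_meas k (ξ k j ω))), hHl1, mul_one]
          rw [Finset.sum_congr rfl fun j _ => hsum j]
          exact ENNReal.mul_inv_cancel (hSG_ne0 k hle ω) (hSG_top k ω)
        -- the density cancels against the weight
        have hcan : ∀ ω y, dens ω y * w ω y = ENNReal.ofReal (G k (Y ω) * H k (Y ω) y) := by
          intro ω y
          have hSH := hSH_pos k hle ω y
          have hofSH : ENNReal.ofReal (∑ j : Fin N, G k (ξ k j ω) * H k (ξ k j ω) y)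
              = ∑ j : Fin N, ENNReal.ofReal (G k (ξ k j ω)) * ENNReal.ofReal (H k (ξ k j ω) y) := by
            rw [ENNReal.ofReal_sum_of_nonneg
              (fun j _ => mul_nonneg (hG_nonneg k _) (hH_pos k _ y).le)]
            exact Finset.sum_congr rfl fun j _ => ENNReal.ofReal_mul (hG_nonneg k _)
          simp only [hwdef, hdensdef]
          rw [ENNReal.ofReal_div_of_pos hSH,
            ENNReal.ofReal_mul (mul_nonneg (hG_nonneg k _) (hH_pos k _ y).le),
            hSG_eq k ω, hofSH]
          exact ennreal_cancel (by rw [← hofSH]; exact (ENNReal.ofReal_pos.mpr hSH).ne')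
            (by rw [← hofSH]; exact ENNReal.ofReal_ne_top)
            (hSG_ne0 k hle ω) (hSG_top k ω)
        -- freezing along each particle
        have hgm : Measurable[(F k).prod inferInstance]
            (Function.uncurry fun ω y => Zc ω * w ω y * ENNReal.ofReal (v (k+1) y)) :=
          ((hZcf.comp measurable_fst).mul hwm).mul
            ((ENNReal.measurable_ofReal.comp hvk1_meas).comp measurable_snd)
        have hFL : ∀ i : Fin N,
            ∫⁻ ω, Zc ω * w ω (ξ (k+1) i ω) * ENNReal.ofReal (v (k+1) (ξ (k+1) i ω)) ∂P
            = ∫⁻ ω, ∫⁻ y, dens ω y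
                * (Zc ω * w ω y * ENNReal.ofReal (v (k+1) y)) ∂lam k ∂P := by
          intro i
          exact freezing (m := F k) ⟨mΩ, hF_le k⟩ P inferInstance (lam k) dens hdm hd1
            (ξ (k+1) i) (hξ_meas (k+1) i) (hbase0 k hk i)
            (fun ω y => Zc ω * w ω y * ENNReal.ofReal (v (k+1) y)) hgm
        -- compute the frozen integral
        have hwym : ∀ ω, Measurable fun y => w ω y :=
          fun ω => hwm.comp measurable_prodMk_left
        have hdym : ∀ ω, Measurable fun y => dens ω y :=
          fun ω => hdm.comp measurable_prodMk_left
        have hinner : ∀ ω, ∫⁻ y, dens ω y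
              * (Zc ω * w ω y * ENNReal.ofReal (v (k+1) y)) ∂lam k
            = Zc ω * (ENNReal.ofReal (G k (Y ω))
              * ∫⁻ y, ENNReal.ofReal (H k (Y ω) y * v (k+1) y) ∂lam k) := by
          intro ω
          calc ∫⁻ y, dens ω y * (Zc ω * w ω y * ENNReal.ofReal (v (k+1) y)) ∂lam k
              = ∫⁻ y, Zc ω * (dens ω y * w ω y * ENNReal.ofReal (v (k+1) y)) ∂lam k :=
                lintegral_congr fun y => by ring
            _ = Zc ω * ∫⁻ y, dens ω y * w ω y * ENNReal.ofReal (v (k+1) y) ∂lam k :=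
                lintegral_const_mul _ (((hdym ω).mul (hwym ω)).mul
                  (ENNReal.measurable_ofReal.comp hvk1_meas))
            _ = Zc ω * ∫⁻ y, ENNReal.ofReal (G k (Y ω))
                  * ENNReal.ofReal (H k (Y ω) y * v (k+1) y) ∂lam k := by
                congr 1
                refine lintegral_congr fun y => ?_
                rw [hcan ω y, ENNReal.ofReal_mul (hG_nonneg k _), mul_assoc,
                  ← ENNReal.ofReal_mul (hH_pos k _ y).le]
            _ = Zc ω * (ENNReal.ofReal (G k (Y ω))
                  * ∫⁻ y, ENNReal.ofReal (H k (Y ω) y * v (k+1) y) ∂lam k) := by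
                rw [lintegral_const_mul _ (show Measurable fun y =>
                  ENNReal.ofReal (H k (Y ω) y * v (k+1) y) from
                    ENNReal.measurable_ofReal.comp ((hHy_meas k (Y ω)).mul hvk1_meas))]
        -- pointwise comparison between the Bochner and the Lebesgue integral
        have hpt : ∀ ω, ENNReal.ofReal (G k (Y ω) * ∫ y, H k (Y ω) y * v (k + 1) y ∂lam k)
            ≤ ENNReal.ofReal (G k (Y ω))
              * ∫⁻ y, ENNReal.ofReal (H k (Y ω) y * v (k+1) y) ∂lam k := by
          intro ω
          by_cases hI : Integrable (fun y => H k (Y ω) y * v (k + 1) y) (lam k)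
          · rw [ENNReal.ofReal_mul (hG_nonneg k _),
              ofReal_integral_eq_lintegral_ofReal hI (Filter.Eventually.of_forall fun y =>
                mul_nonneg (hH_pos k _ y).le (hv0 (k+1) (by omega) y))]
          · rw [integral_undef hI, mul_zero, ENNReal.ofReal_zero]
            exact zero_le
        -- induction hypothesis along each particle
        have hS1 : ∀ i : Fin N,
            ∫⁻ ω, Zc ω * w ω (ξ (k+1) i ω) * ENNReal.ofReal (v (k+1) (ξ (k+1) i ω)) ∂P
            ≤ ∫⁻ ω, Zc ω * w ω (ξ (k+1) i ω)
                * ENNReal.ofReal (vhat (k+1) ω (ξ (k+1) i ω)) ∂P := by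
          intro i
          have hFk1 : F k ≤ F (k+1) := hF_mono (Nat.le_succ k)
          have hembm : @Measurable Ω (Ω × E (k+1)) (F (k+1)) ((F k).prod inferInstance)
              (fun ω => (ω, ξ (k+1) i ω)) :=
            Measurable.prodMk (measurable_id'' hFk1) (hξ_adapted (k+1) i)
          have hZ' : Measurable[F (k+1)] (fun ω => Zc ω * w ω (ξ (k+1) i ω)) :=
            (hZcf.mono hFk1 le_rfl).mul (hwm.comp hembm)
          exact ih (k+1) hk1 _ hZ' _ (hξ_adapted (k+1) i)
        -- measurability of the particle terms
        have hBim : ∀ i : Fin N, Measurable fun ω => Zc ω * w ω (ξ (k+1) i ω)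
            * ENNReal.ofReal (vhat (k+1) ω (ξ (k+1) i ω)) := by
          intro i
          have hembm' : @Measurable Ω (Ω × E (k+1)) mΩ ((F k).prod inferInstance)
              (fun ω => (ω, ξ (k+1) i ω)) :=
            Measurable.prodMk (measurable_id'' (hF_le k)) (hξ_meas (k+1) i)
          exact ((hZcf.mono (hF_le k) le_rfl).mul (hwm.comp hembm')).mul
            (ENNReal.measurable_ofReal.comp ((hvh_meas d (k+1) hk1).comp
              (measurable_id.prodMk (hξ_meas (k+1) i))))
        calc ∫⁻ ω, Zc ω * ENNReal.ofReal
              (G k (Y ω) * ∫ y, H k (Y ω) y * v (k + 1) y ∂lam k) ∂P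
            ≤ ∫⁻ ω, Zc ω * (ENNReal.ofReal (G k (Y ω))
                * ∫⁻ y, ENNReal.ofReal (H k (Y ω) y * v (k+1) y) ∂lam k) ∂P :=
              lintegral_mono fun ω => mul_le_mul_right (hpt ω) _
          _ = (N : ℝ≥0∞)⁻¹ * ∑ i : Fin N, ∫⁻ ω, Zc ω * w ω (ξ (k+1) i ω)
                * ENNReal.ofReal (v (k+1) (ξ (k+1) i ω)) ∂P := by
              have hpi : ∀ i : Fin N, ∫⁻ ω, Zc ω * w ω (ξ (k+1) i ω)
                  * ENNReal.ofReal (v (k+1) (ξ (k+1) i ω)) ∂P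
                  = ∫⁻ ω, Zc ω * (ENNReal.ofReal (G k (Y ω))
                    * ∫⁻ y, ENNReal.ofReal (H k (Y ω) y * v (k+1) y) ∂lam k) ∂P :=
                fun i => (hFL i).trans (lintegral_congr hinner)
              rw [Finset.sum_congr rfl fun i _ => hpi i, Finset.sum_const, Finset.card_univ,
                Fintype.card_fin, nsmul_eq_mul, ← mul_assoc,
                ENNReal.inv_mul_cancel hN0 hNtop, one_mul]
          _ ≤ (N : ℝ≥0∞)⁻¹ * ∑ i : Fin N, ∫⁻ ω, Zc ω * w ω (ξ (k+1) i ω)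
                * ENNReal.ofReal (vhat (k+1) ω (ξ (k+1) i ω)) ∂P :=
              mul_le_mul_right (Finset.sum_le_sum fun i _ => hS1 i) _
          _ = ∫⁻ ω, Zc ω * ENNReal.ofReal
              ((N : ℝ)⁻¹ * ∑ i : Fin N,
                G k (Y ω) * H k (Y ω) (ξ (k + 1) i ω)
                  * (∑ j : Fin N, G k (ξ k j ω))
                  / (∑ j : Fin N, G k (ξ k j ω) * H k (ξ k j ω) (ξ (k + 1) i ω))
                  * vhat (k + 1) ω (ξ (k + 1) i ω)) ∂P := by
              rw [← lintegral_finset_sum' _ fun i _ => (hBim i).aemeasurable,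
                ← lintegral_const_mul' _ _ (ENNReal.inv_ne_top.mpr hN0)]
              refine lintegral_congr fun ω => ?_
              have hterm : ∀ i : Fin N, ENNReal.ofReal
                  (G k (Y ω) * H k (Y ω) (ξ (k + 1) i ω)
                    * (∑ j : Fin N, G k (ξ k j ω))
                    / (∑ j : Fin N, G k (ξ k j ω) * H k (ξ k j ω) (ξ (k + 1) i ω))
                    * vhat (k + 1) ω (ξ (k + 1) i ω))
                  = w ω (ξ (k+1) i ω)
                    * ENNReal.ofReal (vhat (k + 1) ω (ξ (k + 1) i ω)) := by
                intro i
                rw [ENNReal.ofReal_mul (div_nonneg (mul_nonneg (mul_nonneg (hG_nonneg k _)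
                  (hH_pos k _ _).le) (Finset.sum_nonneg fun j _ => hG_nonneg k _))
                  (hSH_pos k hle ω _).le)]
              conv_rhs => rw [ENNReal.ofReal_mul (inv_nonneg.mpr hNR.le),
                ENNReal.ofReal_inv_of_pos hNR, ENNReal.ofReal_natCast,
                ENNReal.ofReal_sum_of_nonneg (fun i _ => mul_nonneg (div_nonneg
                  (mul_nonneg (mul_nonneg (hG_nonneg k _) (hH_pos k _ _).le)
                    (Finset.sum_nonneg fun j _ => hG_nonneg k _)) (hSH_pos k hle ω _).le)
                  (hvh0 (k+1) (by omega) ω _)),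
                Finset.sum_congr rfl fun i _ => hterm i, mul_left_comm, Finset.mul_sum]
              congr 1
              exact Finset.sum_congr rfl fun i _ => mul_assoc _ _ _
      -- split the left-hand side
      have hmeas1 : Measurable fun ω => Z ω * c1 (Y ω) * ENNReal.ofReal (f k (Y ω)) :=
        (hZm.mul (hc1m.comp hYm)).mul (ENNReal.measurable_ofReal.comp ((hf_meas k).comp hYm))
      have hsplitL : ∫⁻ ω, Z ω * ENNReal.ofReal (v k (Y ω)) ∂P
          = (∫⁻ ω, Z ω * c1 (Y ω) * ENNReal.ofReal (f k (Y ω)) ∂P)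
            + ∫⁻ ω, Zc ω * ENNReal.ofReal
                (G k (Y ω) * ∫ y, H k (Y ω) y * v (k + 1) y ∂lam k) ∂P := by
        rw [← lintegral_add_left hmeas1]
        refine lintegral_congr fun ω => ?_
        rw [hv_rec k hk (Y ω)]
        by_cases hx : f k (Y ω) < G k (Y ω) * ∫ y, H k (Y ω) y * v (k + 1) y ∂lam k
        · rw [max_eq_right hx.le]
          simp [hc1, hc2, hZc, hx]
        · rw [max_eq_left (not_lt.1 hx)]
          simp [hc1, hc2, hZc, hx]
      have hterm1 : ∫⁻ ω, Z ω * c1 (Y ω) * ENNReal.ofReal (f k (Y ω)) ∂P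
          ≤ ∫⁻ ω, Z ω * c1 (Y ω) * ENNReal.ofReal (vhat k ω (Y ω)) ∂P :=
        lintegral_mono fun ω => mul_le_mul_right
          (ENNReal.ofReal_le_ofReal (hfvh k hk.le ω (Y ω))) _
      have hterm2 : ∫⁻ ω, Zc ω * ENNReal.ofReal
            (G k (Y ω) * ∫ y, H k (Y ω) y * v (k + 1) y ∂lam k) ∂P
          ≤ ∫⁻ ω, Zc ω * ENNReal.ofReal (vhat k ω (Y ω)) ∂P := by
        refine hkey.trans (lintegral_mono fun ω => mul_le_mul_right ?_ _)
        refine ENNReal.ofReal_le_ofReal ?_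
        rw [hvhat_rec k hk ω (Y ω)]
        exact le_max_right _ _
      have hmeas2 : Measurable fun ω => Z ω * c1 (Y ω) * ENNReal.ofReal (vhat k ω (Y ω)) :=
        (hZm.mul (hc1m.comp hYm)).mul (ENNReal.measurable_ofReal.comp hvhYm)
      calc ∫⁻ ω, Z ω * ENNReal.ofReal (v k (Y ω)) ∂P
          = (∫⁻ ω, Z ω * c1 (Y ω) * ENNReal.ofReal (f k (Y ω)) ∂P)
            + ∫⁻ ω, Zc ω * ENNReal.ofReal
                (G k (Y ω) * ∫ y, H k (Y ω) y * v (k + 1) y ∂lam k) ∂P := hsplitL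
        _ ≤ (∫⁻ ω, Z ω * c1 (Y ω) * ENNReal.ofReal (vhat k ω (Y ω)) ∂P)
            + ∫⁻ ω, Zc ω * ENNReal.ofReal (vhat k ω (Y ω)) ∂P := add_le_add hterm1 hterm2
        _ = ∫⁻ ω, (Z ω * c1 (Y ω) * ENNReal.ofReal (vhat k ω (Y ω))
            + Zc ω * ENNReal.ofReal (vhat k ω (Y ω))) ∂P := (lintegral_add_left hmeas2 _).symm
        _ = ∫⁻ ω, Z ω * ENNReal.ofReal (vhat k ω (Y ω)) ∂P := by
            refine lintegral_congr fun ω => ?_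
            by_cases hx : f k (Y ω) < G k (Y ω) * ∫ y, H k (Y ω) y * v (k + 1) y ∂lam k
            · simp [hc1, hc2, hZc, hx]
            · simp [hc1, hc2, hZc, hx]
  -- conclusion
  intro k hk x
  have hd : n = k + (n - k) := by omega
  have hS := S (n - k) k hd (fun _ => 1) measurable_const (fun _ => x) measurable_const
  simp only [one_mul] at hS
  rw [lintegral_const] at hS
  have hRHS : ∫⁻ ω, ENNReal.ofReal (vhat k ω x) ∂P
      = ENNReal.ofReal (∫ ω, vhat k ω x ∂P) :=
    (ofReal_integral_eq_lintegral_ofReal (hvhat_int k x)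
      (Filter.Eventually.of_forall fun ω => hvh0 k hk ω x)).symm
  rw [hRHS, measure_univ, mul_one] at hS
  have := ENNReal.ofReal_le_ofReal_iff (integral_nonneg fun ω => hvh0 k hk ω x) |>.mp hS
  exact this
end
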